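/- arXiv:1610.07005 — 4 statements merged into one kernel-verified Lean document; each statement's English description precedes it below -/
import Mathlib

section
/- For n ≥ 3, the action of GL₁(ℂ)² × SL_n(ℂ) on ℂⁿ ⊕ (ℂⁿ)* given by (s,t,g) · (x,y) = (s·gx, t·(g⁻¹)ᵀy) has a Zariski-dense orbit, namely the set of pairs (x,y) with ⟨x|y⟩ ≠ 0, and the dual pairing f(x,y) = ⟨x|y⟩ is a relative invariant with f((s,t,g)·(x,y)) = st·f(x,y). -/
open Matrix MvPolynomial

noncomputable def dotL {n : ℕ} (y : Fin n → ℂ) : (Fin n → ℂ) →ₗ[ℂ] ℂ where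
  toFun v := y ⬝ᵥ v
  map_add' a b := by simp [dotProduct_add]
  map_smul' c a := by simp

@[simp] lemma dotL_apply {n : ℕ} (y v : Fin n → ℂ) : dotL y v = y ⬝ᵥ v := rfl

lemma exists_sl_factor {n : ℕ} [NeZero n] (x y : Fin n → ℂ) (hc : y ⬝ᵥ x ≠ 0) :
    ∃ (s t : ℂˣ) (g : SpecialLinearGroup (Fin n) ℂ),
      x = (s : ℂ) • (g.1 *ᵥ Pi.single 0 1) ∧
      y = (t : ℂ) • ((g.1⁻¹)ᵀ *ᵥ Pi.single 0 1) := by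
  classical
  set f := dotL y with hf
  have hfx : f x ≠ 0 := hc
  -- finrank of kernel
  have hsurj : Function.Surjective f := by
    intro c
    exact ⟨(c / f x) • x, by simp [div_mul_cancel₀ _ hfx, smul_eq_mul]⟩
  have hrange : LinearMap.range f = ⊤ := LinearMap.range_eq_top.2 hsurj
  have hrank : Module.finrank ℂ (LinearMap.ker f) = n - 1 := by
    have h1 := LinearMap.finrank_range_add_finrank_ker f
    rw [hrange] at h1
    simp [Module.finrank_self, Module.finrank_fin_fun] at h1
    omega
  set kb := Module.finBasisOfFinrankEq ℂ (LinearMap.ker f) hrank with hkb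
  have hli : ∀ (c : ℂ), ∀ z ∈ LinearMap.ker f, c • x + z = 0 → c = 0 := by
    intro c z hz h
    have := congrArg f h
    simp [LinearMap.mem_ker.1 hz] at this
    rcases this with h' | h'
    · exact h'
    · exact absurd h' hfx
  have hsp : ∀ z : Fin n → ℂ, ∃ c : ℂ, z + c • x ∈ LinearMap.ker f := by
    intro z
    refine ⟨-(f z) / f x, ?_⟩
    simp [LinearMap.mem_ker, div_mul_cancel₀ _ hfx]
  set b0 := Module.Basis.mkFinCons x kb hli hsp with hb0
  have hn1 : n - 1 + 1 = n := Nat.succ_pred_eq_of_pos (Nat.pos_of_ne_zero (NeZero.ne n))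
  set b := b0.reindex (finCongr hn1) with hb
  have hb_zero : b 0 = x := by
    rw [hb, Module.Basis.reindex_apply]
    have : (finCongr hn1).symm 0 = 0 := rfl
    rw [this, hb0]
    simp [Module.Basis.coe_mkFinCons]
  have hb_ker : ∀ j : Fin n, j ≠ 0 → y ⬝ᵥ b j = 0 := by
    intro j hj
    rw [hb, Module.Basis.reindex_apply, hb0]
    set j' : Fin (n - 1 + 1) := (finCongr hn1).symm j with hj'
    have hj'0 : j' ≠ 0 := by
      intro h
      apply hj
      have : j = finCongr hn1 j' := by simp [hj']
      rw [this, h]; rfl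
    obtain ⟨k, hk⟩ : ∃ k : Fin (n - 1), j' = k.succ :=
      ⟨j'.pred hj'0, (Fin.succ_pred j' hj'0).symm⟩
    rw [hk]
    have : (Module.Basis.mkFinCons x kb hli hsp) k.succ = (kb k : Fin n → ℂ) := by
      rw [show ⇑(Module.Basis.mkFinCons x kb hli hsp) = Fin.cons x (Subtype.val ∘ ⇑kb) from
        Module.Basis.coe_mkFinCons x kb hli hsp]
      simp
    rw [this]
    exact LinearMap.mem_ker.1 (kb k).2
  -- the matrix with columns b j
  set M := (Pi.basisFun ℂ (Fin n)).toMatrix ⇑b with hM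
  have hMij : ∀ i j, M i j = b j i := by
    intro i j
    rw [hM, Module.Basis.toMatrix_apply, Pi.basisFun_repr]
  have : Invertible M := (Pi.basisFun ℂ (Fin n)).invertibleToMatrix b
  have hdet : IsUnit M.det := (isUnit_iff_isUnit_det M).1 (isUnit_of_invertible M)
  set d := M.det with hd
  have hd0 : d ≠ 0 := hdet.ne_zero
  have key1 : M *ᵥ Pi.single 0 1 = x := by
    funext i
    rw [mulVec_single]
    simp [hMij, hb_zero]
  set c := y ⬝ᵥ x with hcc
  have key2 : y ᵥ* M = c • (Pi.single 0 1 : Fin n → ℂ) := by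
    funext j
    by_cases hj : j = 0
    · subst hj
      rw [hcc]
      simp [vecMul, dotProduct, hMij, hb_zero, mul_comm]
    · have := hb_ker j hj
      simp only [vecMul, dotProduct, hMij] at *
      simp [this, Pi.single_apply, hj]
  have key3 : y = c • (Pi.single 0 1 ᵥ* M⁻¹) := by
    have h1 : (y ᵥ* M) ᵥ* M⁻¹ = y := by
      rw [vecMul_vecMul, mul_nonsing_inv M hdet, vecMul_one]
    rw [← h1, key2]
    funext j
    simp only [vecMul, dotProduct, Pi.smul_apply, smul_eq_mul]
    simp [Pi.single_apply, ite_mul, mul_ite, mul_comm]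
  -- scale to SL
  set D := diagonal (fun i : Fin n => if i = 0 then d⁻¹ else 1) with hD
  set E := diagonal (fun i : Fin n => if i = 0 then d else 1) with hE
  have hdetD : D.det = d⁻¹ := by
    rw [hD, det_diagonal]
    rw [Finset.prod_eq_single 0 (fun i _ hi => by simp [hi]) (by simp)]
    simp
  have hDE : D * E = 1 := by
    rw [hD, hE, diagonal_mul_diagonal]
    have h5 : (fun i : Fin n => (if i = 0 then d⁻¹ else 1) * (if i = 0 then d else 1))
        = fun _ => (1:ℂ) := by
      funext i; by_cases hi : i = 0 <;> simp [hi, inv_mul_cancel₀ hd0]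
    rw [h5, diagonal_one]
  set g := M * D with hg
  have hdetg : g.det = 1 := by
    rw [hg, det_mul, hdetD, ← hd, mul_inv_cancel₀ hd0]
  have hginv : g⁻¹ = E * M⁻¹ := by
    apply inv_eq_right_inv
    rw [hg, Matrix.mul_assoc, ← Matrix.mul_assoc D E, hDE, Matrix.one_mul,
      mul_nonsing_inv M hdet]
  refine ⟨Units.mk0 d hd0, Units.mk0 (c * d⁻¹) (mul_ne_zero hc (inv_ne_zero hd0)), ⟨g, hdetg⟩, ?_, ?_⟩
  · have : g *ᵥ Pi.single 0 1 = d⁻¹ • x := by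
      rw [hg, ← mulVec_mulVec]
      have hD1 : D *ᵥ Pi.single 0 1 = d⁻¹ • (Pi.single 0 1 : Fin n → ℂ) := by
        funext i
        rw [hD, mulVec_diagonal]
        by_cases hi : i = 0 <;> simp [hi, Pi.single_apply]
      rw [hD1, mulVec_smul, key1]
    rw [this]
    simp [smul_smul, mul_inv_cancel₀ hd0]
  · have h2 : (g⁻¹)ᵀ *ᵥ Pi.single 0 1 = Pi.single 0 1 ᵥ* g⁻¹ := mulVec_transpose _ _
    have h3 : Pi.single 0 1 ᵥ* E = d • (Pi.single 0 1 : Fin n → ℂ) := by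
      funext i
      rw [hE, vecMul_diagonal]
      by_cases hi : i = 0 <;> simp [hi, Pi.single_apply, mul_comm]
    rw [h2, hginv, ← vecMul_vecMul, h3]
    have h4 : (d • (Pi.single 0 1 : Fin n → ℂ)) ᵥ* M⁻¹ = d • (Pi.single 0 1 ᵥ* M⁻¹) := by
      funext j
      simp only [vecMul, dotProduct, Pi.smul_apply, smul_eq_mul, Pi.single_apply]
      rw [Finset.mul_sum]
      congr 1; funext i; ring
    rw [h4, smul_smul, key3]
    congr 1
    rw [Units.val_mk0]
    field_simp

/-- Ks I-1: the action of `GL₁² × SL n` on `ℂⁿ ⊕ (ℂⁿ)*` given by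
`(s, t, g) · (x, y) = (s • g x, t • (g⁻¹)ᵀ y)` (for `n ≥ 3`) has the dual
pairing as a relative invariant with character `s t`, the set where the
pairing is nonzero is a single orbit, and that set is Zariski-dense. -/
theorem ks_I_1_prehomogeneous (n : ℕ) (hn : 3 ≤ n) :
    (∀ (s t : ℂˣ) (g : SpecialLinearGroup (Fin n) ℂ) (x y : Fin n → ℂ),
      (∑ i, ((s : ℂ) • (g.1 *ᵥ x)) i * ((t : ℂ) • ((g.1⁻¹)ᵀ *ᵥ y)) i)
        = (s : ℂ) * (t : ℂ) * ∑ i, x i * y i) ∧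
    (∀ x y x' y' : Fin n → ℂ,
      (∑ i, x i * y i) ≠ 0 → (∑ i, x' i * y' i) ≠ 0 →
      ∃ (s t : ℂˣ) (g : SpecialLinearGroup (Fin n) ℂ),
        x' = (s : ℂ) • (g.1 *ᵥ x) ∧ y' = (t : ℂ) • ((g.1⁻¹)ᵀ *ᵥ y)) ∧
    (∀ P : MvPolynomial (Fin n ⊕ Fin n) ℂ,
      (∀ x y : Fin n → ℂ, (∑ i, x i * y i) ≠ 0 → eval (Sum.elim x y) P = 0) →
      ∀ x y : Fin n → ℂ, eval (Sum.elim x y) P = 0) := by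
  haveI : NeZero n := ⟨by omega⟩
  have cinv : ∀ G : SpecialLinearGroup (Fin n) ℂ,
      (G.1)⁻¹ = ((G⁻¹ : SpecialLinearGroup (Fin n) ℂ) : Matrix (Fin n) (Fin n) ℂ) := by
    intro G
    apply inv_eq_right_inv
    exact congrArg (fun A : SpecialLinearGroup (Fin n) ℂ => A.1) (mul_inv_cancel G)
  have detu : ∀ G : SpecialLinearGroup (Fin n) ℂ, IsUnit G.1.det := by
    intro G; rw [G.2]; exact isUnit_one
  refine ⟨?_, ?_, ?_⟩
  · -- relative invariance
    intro s t g x y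
    have step1 : (∑ i, ((s : ℂ) • (g.1 *ᵥ x)) i * ((t : ℂ) • ((g.1⁻¹)ᵀ *ᵥ y)) i)
        = (s : ℂ) * (t : ℂ) * ((g.1 *ᵥ x) ⬝ᵥ ((g.1⁻¹)ᵀ *ᵥ y)) := by
      simp only [Pi.smul_apply, smul_eq_mul, dotProduct, Finset.mul_sum]
      exact Finset.sum_congr rfl fun i _ => by ring
    rw [step1]
    have step2 : (g.1 *ᵥ x) ⬝ᵥ ((g.1⁻¹)ᵀ *ᵥ y) = x ⬝ᵥ y := by
      rw [dotProduct_mulVec, vecMul_transpose, mulVec_mulVec,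
        nonsing_inv_mul _ (detu g), one_mulVec]
    rw [step2]
    rfl
  · -- transitivity on the open orbit
    intro x y x' y' hxy hxy'
    have h1 : y ⬝ᵥ x ≠ 0 := by rw [dotProduct_comm]; exact hxy
    have h2 : y' ⬝ᵥ x' ≠ 0 := by rw [dotProduct_comm]; exact hxy'
    obtain ⟨s₁, t₁, g₁, hx1, hy1⟩ := exists_sl_factor x y h1
    obtain ⟨s₂, t₂, g₂, hx2, hy2⟩ := exists_sl_factor x' y' h2
    refine ⟨s₂ * s₁⁻¹, t₂ * t₁⁻¹, g₂ * g₁⁻¹, ?_, ?_⟩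
    · have e1 : g₁.1⁻¹ *ᵥ x = (s₁ : ℂ) • (Pi.single 0 1 : Fin n → ℂ) := by
        rw [hx1, mulVec_smul, mulVec_mulVec, nonsing_inv_mul _ (detu g₁), one_mulVec]
      have hscal : ((s₂ * s₁⁻¹ : ℂˣ) : ℂ) * (s₁ : ℂ) = (s₂ : ℂ) := by
        rw [← Units.val_mul, inv_mul_cancel_right]
      calc x' = (s₂ : ℂ) • (g₂.1 *ᵥ Pi.single 0 1) := hx2
        _ = ((s₂ * s₁⁻¹ : ℂˣ) : ℂ) • ((g₂ * g₁⁻¹).1 *ᵥ x) := by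
            rw [show (g₂ * g₁⁻¹).1 = g₂.1 * (g₁⁻¹).1 from rfl, ← cinv g₁, ← mulVec_mulVec, e1,
              mulVec_smul, smul_smul, hscal]
    · have e2 : g₁.1ᵀ *ᵥ y = (t₁ : ℂ) • (Pi.single 0 1 : Fin n → ℂ) := by
        rw [hy1, mulVec_smul, mulVec_mulVec, ← transpose_mul,
          nonsing_inv_mul _ (detu g₁), transpose_one, one_mulVec]
      have hscal : ((t₂ * t₁⁻¹ : ℂˣ) : ℂ) * (t₁ : ℂ) = (t₂ : ℂ) := by
        rw [← Units.val_mul, inv_mul_cancel_right]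
      have hA : ((g₂ * g₁⁻¹).1)⁻¹ = g₁.1 * g₂.1⁻¹ := by
        rw [cinv (g₂ * g₁⁻¹), _root_.mul_inv_rev, inv_inv, show (g₁ * g₂⁻¹).1 = g₁.1 * (g₂⁻¹).1 from rfl, ← cinv g₂]
      calc y' = (t₂ : ℂ) • ((g₂.1⁻¹)ᵀ *ᵥ Pi.single 0 1) := hy2
        _ = ((t₂ * t₁⁻¹ : ℂˣ) : ℂ) • (((g₂ * g₁⁻¹).1⁻¹)ᵀ *ᵥ y) := by
            rw [hA, transpose_mul, ← mulVec_mulVec, e2, mulVec_smul, smul_smul, hscal]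
  · -- Zariski density
    intro P hP x y
    classical
    set F : MvPolynomial (Fin n ⊕ Fin n) ℂ := ∑ i, X (Sum.inl i) * X (Sum.inr i) with hF
    have hFeval : ∀ z : (Fin n ⊕ Fin n) → ℂ,
        eval z F = ∑ i, z (Sum.inl i) * z (Sum.inr i) := by
      intro z; simp [hF]
    have hmul : F * P = 0 := by
      apply MvPolynomial.funext (q := 0)
      intro z
      rw [_root_.map_mul, hFeval, map_zero]
      have hz : z = Sum.elim (z ∘ Sum.inl) (z ∘ Sum.inr) := by
        funext w; cases w <;> rfl
      by_cases h : (∑ i, z (Sum.inl i) * z (Sum.inr i)) = 0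
      · rw [h, zero_mul]
      · have := hP (z ∘ Sum.inl) (z ∘ Sum.inr) h
        rw [← hz] at this
        rw [this, mul_zero]
    have hF0 : F ≠ 0 := by
      intro h
      have h1 := hFeval (Sum.elim (Pi.single 0 1) (Pi.single 0 1))
      rw [h, map_zero] at h1
      simp [Pi.single_apply] at h1
    have hP0 : P = 0 := by
      rcases mul_eq_zero.1 hmul with h | h
      · exact absurd h hF0
      · exact h
    rw [hP0, map_zero]
end

section
/- The module (GL₁ⁿ⁺¹ × SL_n(ℂ)) acting on (ℂⁿ)^{⊕(n+1)} by (t₁,…,t_{n+1}, g)·(x₁,…,x_{n+1}) = (t₁gx₁,…,t_{n+1}gx_{n+1}) has a Zariski-dense orbit, and for each i = 1,…,n+1 the polynomial f_i(x₁,…,x_{n+1}) = det(x₁,…,x̂_i,…,x_{n+1}) (determinant of the matrix omitting the i-th vector) is a relative invariant. -/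
open Matrix MvPolynomial

/-- Ks I-3: the action of `GL₁ⁿ⁺¹ × SL n` on `(ℂⁿ)ⁿ⁺¹` by
`(t, g) · x = (t₁ • g x₁, …, t_{n+1} • g x_{n+1})` has a Zariski-dense orbit,
and each `f_i(x) = det(x₁, …, x̂_i, …, x_{n+1})` is a relative invariant
(with character `∏_{j ≠ i} t_j`, since `det g = 1`). -/
theorem ks_I_3_prehomogeneous (n : ℕ) :
    (∃ v : Fin (n + 1) → Fin n → ℂ,
      ∀ P : MvPolynomial (Fin (n + 1) × Fin n) ℂ,
        (∀ (t : Fin (n + 1) → ℂˣ) (g : SpecialLinearGroup (Fin n) ℂ),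
          eval (fun p => ((t p.1 : ℂ) • (g.1 *ᵥ v p.1)) p.2) P = 0) →
        ∀ x : Fin (n + 1) → Fin n → ℂ, eval (fun p => x p.1 p.2) P = 0) ∧
    (∀ (i : Fin (n + 1)) (t : Fin (n + 1) → ℂˣ) (g : SpecialLinearGroup (Fin n) ℂ)
        (x : Fin (n + 1) → Fin n → ℂ),
      (Matrix.of fun (r : Fin n) (c : Fin n) =>
          ((t (i.succAbove c) : ℂ) • (g.1 *ᵥ x (i.succAbove c))) r).det
        = (∏ j ∈ Finset.univ.erase i, (t j : ℂ)) *
            (Matrix.of fun (r : Fin n) (c : Fin n) => x (i.succAbove c) r).det) := by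
  constructor
  · rcases Nat.eq_zero_or_pos n with hn | hn
    · subst hn
      refine ⟨fun _ _ => 0, fun P hP x => ?_⟩
      have h := hP 1 1
      have : (fun p : Fin 1 × Fin 0 => ((((1 : Fin 1 → ℂˣ) p.1) : ℂ) •
          (((1 : SpecialLinearGroup (Fin 0) ℂ)).1 *ᵥ (fun _ => 0 : Fin 0 → ℂ))) p.2)
          = fun p : Fin 1 × Fin 0 => x p.1 p.2 := by
        funext p
        exact p.2.elim0
      rwa [this] at h
    -- generic point: v i = e_i for i < n, v (last) = all-ones vector
    set v : Fin (n + 1) → Fin n → ℂ :=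
      fun i j => if (i : ℕ) = n ∨ (i : ℕ) = (j : ℕ) then 1 else 0 with hv
    have hv_last : v (Fin.last n) = fun _ => 1 := by
      funext j; simp [hv]
    have hv_cast : ∀ k : Fin n, v (Fin.castSucc k) = fun j => if k = j then 1 else 0 := by
      intro k
      funext j
      simp only [hv, Fin.coe_castSucc]
      rcases eq_or_ne k j with rfl | h
      · simp
      · have h' : ¬((k : ℕ) = n ∨ (k : ℕ) = (j : ℕ)) := by
          push_neg
          exact ⟨k.isLt.ne, fun hh => h (Fin.val_injective hh)⟩
        rw [if_neg h', if_neg h]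
    refine ⟨v, fun P hP x => ?_⟩
    -- the relative invariants as polynomials
    set F : MvPolynomial (Fin (n + 1) × Fin n) ℂ :=
      (Matrix.of fun r c : Fin n =>
        (X ((Fin.castSucc c), r) : MvPolynomial (Fin (n + 1) × Fin n) ℂ)).det with hF
    set G : Fin n → MvPolynomial (Fin (n + 1) × Fin n) ℂ := fun j =>
      (Matrix.of fun r c : Fin n =>
        if c = j then (X ((Fin.last n), r) : MvPolynomial (Fin (n + 1) × Fin n) ℂ)
        else X ((Fin.castSucc c), r)).det with hG
    have hFeval : ∀ y : (Fin (n + 1) × Fin n) → ℂ,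
        eval y F = (Matrix.of fun r c : Fin n => y (Fin.castSucc c, r)).det := by
      intro y
      rw [hF, RingHom.map_det]
      congr 1
      ext r c
      simp
    have hGeval : ∀ (y : (Fin (n + 1) × Fin n) → ℂ) (j : Fin n),
        eval y (G j) = cramer (Matrix.of fun r c : Fin n => y (Fin.castSucc c, r))
          (fun r => y (Fin.last n, r)) j := by
      intro y j
      rw [hG, RingHom.map_det, cramer_apply]
      congr 1
      ext r c
      by_cases h : c = j <;> simp [h, Matrix.updateCol_apply]
    -- the claim: P * (F * ∏ G j) vanishes everywhere
    have key : ∀ y : (Fin (n + 1) × Fin n) → ℂ,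
        eval y P = 0 ∨ eval y (F * ∏ j, G j) = 0 := by
      intro y
      set M : Matrix (Fin n) (Fin n) ℂ := Matrix.of fun r c => y (Fin.castSucc c, r) with hM
      set b : Fin n → ℂ := fun r => y (Fin.last n, r) with hb
      by_cases h0 : M.det = 0 ∨ ∃ j, cramer M b j = 0
      · right
        rw [_root_.map_mul, map_prod]
        rcases h0 with h0 | ⟨j, hj⟩
        · rw [hFeval y, ← hM, h0, zero_mul]
        · rw [Finset.prod_eq_zero (Finset.mem_univ j) (by rw [hGeval y j]; exact hj), mul_zero]
      · left
        push_neg at h0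
        obtain ⟨hdet, hcr⟩ := h0
        set cv : Fin n → ℂ := fun j => cramer M b j / M.det with hcv
        have hcv0 : ∀ j, cv j ≠ 0 := fun j => div_ne_zero (hcr j) hdet
        have hMc : M *ᵥ cv = b := by
          have h1 : cv = (M.det)⁻¹ • cramer M b := by
            funext j; simp [hcv, div_eq_inv_mul, smul_eq_mul]
          rw [h1, Matrix.mulVec_smul, Matrix.mulVec_cramer, smul_smul,
            inv_mul_cancel₀ hdet, one_smul]
        have hw : M.det * ∏ j, cv j ≠ 0 :=
          mul_ne_zero hdet (Finset.prod_ne_zero_iff.2 fun j _ => hcv0 j)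
        obtain ⟨τ, hτ⟩ := IsAlgClosed.exists_pow_nat_eq (M.det * ∏ j, cv j) hn
        have hτ0 : τ ≠ 0 := by
          intro h
          rw [h, zero_pow hn.ne'] at hτ
          exact hw hτ.symm
        set d : Fin n → ℂ := fun k => cv k / τ with hd
        set gm : Matrix (Fin n) (Fin n) ℂ := M * Matrix.diagonal d with hgm
        have hgdet : gm.det = 1 := by
          rw [hgm, Matrix.det_mul, Matrix.det_diagonal]
          have : ∏ k, d k = (∏ k, cv k) / τ ^ n := by
            rw [Finset.prod_div_distrib, Finset.prod_const, Finset.card_univ, Fintype.card_fin]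
          rw [this, hτ]
          field_simp
          exact div_self (Finset.prod_ne_zero_iff.2 fun j _ => hcv0 j)
        set t : Fin (n + 1) → ℂˣ := fun i =>
          if h : (i : ℕ) < n then Units.mk0 (τ / cv ⟨(i : ℕ), h⟩)
            (div_ne_zero hτ0 (hcv0 _))
          else Units.mk0 τ hτ0 with ht
        have hpt : ∀ p : Fin (n + 1) × Fin n,
            ((t p.1 : ℂ) • (gm *ᵥ v p.1)) p.2 = y p := by
          rintro ⟨i, r⟩
          have hentry : ∀ c, gm r c = M r c * d c := fun c => Matrix.mul_diagonal d M r c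
          induction i using Fin.lastCases with
          | last =>
            have htl : ((t (Fin.last n)) : ℂ) = τ := by
              simp only [ht, Fin.val_last, lt_irrefl, dif_neg, not_false_iff, Units.val_mk0,
                lt_self_iff_false]
            have : (gm *ᵥ v (Fin.last n)) r = ∑ c, M r c * d c := by
              rw [hv_last]
              simp [Matrix.mulVec, dotProduct, hentry]
            simp only [Pi.smul_apply, smul_eq_mul, this, htl]
            have h5 : τ * ∑ c, M r c * d c = ∑ c, M r c * cv c := by
              rw [Finset.mul_sum]
              refine Finset.sum_congr rfl fun c _ => ?_
              have : τ * (M r c * d c) = M r c * cv c * (τ / τ) := by rw [hd]; ring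
              rw [this, div_self hτ0, mul_one]
            rw [h5]
            have := congrFun hMc r
            simpa [Matrix.mulVec, dotProduct, hb] using this
          | cast k =>
            have hlt : ((Fin.castSucc k : Fin (n + 1)) : ℕ) < n := by
              simpa using k.isLt
            have htk : ((t (Fin.castSucc k)) : ℂ) = τ / cv k := by
              simp only [ht, dif_pos hlt, Units.val_mk0]
              have he : (⟨((Fin.castSucc k : Fin (n + 1)) : ℕ), hlt⟩ : Fin n) = k :=
                Fin.ext (by simp)
              rw [he]
            have hgv : (gm *ᵥ v (Fin.castSucc k)) r = M r k * d k := by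
              rw [hv_cast k]
              simp only [Matrix.mulVec, dotProduct, hentry, mul_ite, mul_one, mul_zero]
              rw [Finset.sum_ite_eq Finset.univ k fun j => M r j * d j]
              simp
            simp only [Pi.smul_apply, smul_eq_mul, hgv, htk]
            have h6 : τ / cv k * (M r k * d k) = M r k * (τ / τ) * (cv k / cv k) := by
              rw [hd]; ring
            rw [h6, div_self hτ0, div_self (hcv0 k), mul_one, mul_one, hM]
            rfl
        have := hP t ⟨gm, hgdet⟩
        rwa [funext hpt] at this
    have hPQ : P * (F * ∏ j, G j) = 0 := by
      apply MvPolynomial.funext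
      intro y
      rw [_root_.map_mul, _root_.map_zero]
      rcases key y with h | h
      · rw [h, zero_mul]
      · rw [h, mul_zero]
    have hQne : (F * ∏ j, G j) ≠ 0 := by
      intro h
      have h1 : eval (fun p => v p.1 p.2) (F * ∏ j, G j) = 0 := by rw [h, map_zero]
      rw [_root_.map_mul, map_prod] at h1
      have hFv : eval (fun p => v p.1 p.2) F = 1 := by
        rw [hFeval]
        have : (Matrix.of fun r c : Fin n => v (Fin.castSucc c) r)
            = (1 : Matrix (Fin n) (Fin n) ℂ) := by
          ext r c
          rw [Matrix.of_apply, hv_cast c]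
          simp [Matrix.one_apply, eq_comm]
        rw [show (Matrix.of fun r c : Fin n => (fun p : Fin (n+1) × Fin n => v p.1 p.2)
          (Fin.castSucc c, r)) = (Matrix.of fun r c : Fin n => v (Fin.castSucc c) r) from rfl,
          this, Matrix.det_one]
      have hGv : ∀ j, eval (fun p => v p.1 p.2) (G j) = 1 := by
        intro j
        rw [hGeval]
        have h2 : (Matrix.of fun r c : Fin n => (fun p : Fin (n+1) × Fin n => v p.1 p.2)
            (Fin.castSucc c, r)) = (1 : Matrix (Fin n) (Fin n) ℂ) := by
          ext r c
          show v (Fin.castSucc c) r = _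
          rw [hv_cast c]
          simp only []
          simp [Matrix.one_apply, eq_comm]
        rw [h2]
        have h3 : (fun r : Fin n => (fun p : Fin (n+1) × Fin n => v p.1 p.2) (Fin.last n, r))
            = fun _ => (1 : ℂ) := by
          funext r
          show v (Fin.last n) r = 1
          rw [hv_last]
        rw [h3, cramer_one]
        rfl
      rw [hFv, one_mul] at h1
      have : (∏ j, eval (fun p => v p.1 p.2) (G j)) = 1 :=
        Finset.prod_eq_one fun j _ => hGv j
      rw [this] at h1
      exact one_ne_zero h1
    have hP0 : P = 0 := by
      rcases mul_eq_zero.1 hPQ with h | h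
      · exact h
      · exact absurd h hQne
    rw [hP0, map_zero]
  · intro i t g x
    set A : Matrix (Fin n) (Fin n) ℂ := Matrix.of fun r c => x (i.succAbove c) r with hA
    have hmat : (Matrix.of fun (r : Fin n) (c : Fin n) =>
        ((t (i.succAbove c) : ℂ) • (g.1 *ᵥ x (i.succAbove c))) r)
        = g.1 * A * Matrix.diagonal (fun c => (t (i.succAbove c) : ℂ)) := by
      ext r c
      rw [Matrix.mul_diagonal]
      simp only [Matrix.of_apply, Pi.smul_apply, smul_eq_mul, Matrix.mul_apply,
        Matrix.mulVec, dotProduct, hA, Finset.sum_mul, Finset.mul_sum]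
      exact Finset.sum_congr rfl fun k _ => by ring
    rw [hmat, Matrix.det_mul, Matrix.det_mul, g.2, one_mul, Matrix.det_diagonal]
    have h1 : (t i : ℂ) * ∏ j ∈ Finset.univ.erase i, (t j : ℂ)
        = (t i : ℂ) * ∏ c : Fin n, (t (i.succAbove c) : ℂ) :=
      (Finset.mul_prod_erase Finset.univ (fun j => (t j : ℂ)) (Finset.mem_univ i)).trans
        (Fin.prod_univ_succAbove (fun j => (t j : ℂ)) i)
    have h2 := mul_left_cancel₀ (Units.ne_zero (t i)) h1
    rw [← h2]
    ring
end

section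
/- For the action of GL₁(ℂ)² × SL_n(ℂ) on Sym²ℂⁿ ⊕ (ℂⁿ)* by (s,t,g)·(A,y) = (s·gAgᵀ, t·(g⁻¹)ᵀy), the polynomials f₁(A,y) = det(A) and f₂(A,y) = yᵀAy are relative invariants, and the connected stabilizer of the generic point (I, e₁*) is isomorphic to SO_{n-1}(ℂ). -/
open Matrix

namespace Ks112



variable {ι : Type*} [Fintype ι] [DecidableEq ι]

set_option linter.unusedSectionVars false

/-- Reflection in the hyperplane orthogonal to `v` (for the standard bilinear form). -/
noncomputable def rf (v : ι → ℂ) : Matrix ι ι ℂ :=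
  1 - (2 / (v ⬝ᵥ v)) • vecMulVec v v

lemma vecMulVec_transpose (v w : ι → ℂ) : (vecMulVec v w)ᵀ = vecMulVec w v := by
  ext i j; simp [vecMulVec_apply, mul_comm]

lemma rf_transpose (v : ι → ℂ) : (rf v)ᵀ = rf v := by
  rw [rf, transpose_sub, transpose_one, transpose_smul, vecMulVec_transpose]

lemma vecMulVec_mul_vecMulVec (v w x y : ι → ℂ) :
    vecMulVec v w * vecMulVec x y = (w ⬝ᵥ x) • vecMulVec v y := by
  ext i j
  simp only [mul_apply, vecMulVec_apply, Matrix.smul_apply, dotProduct, Finset.sum_mul, smul_eq_mul]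
  exact Finset.sum_congr rfl fun k _ => by ring

lemma vecMulVec_mulVec (v w x : ι → ℂ) : (vecMulVec v w) *ᵥ x = (w ⬝ᵥ x) • v := by
  ext i
  simp only [mulVec, vecMulVec_apply, dotProduct, Pi.smul_apply, smul_eq_mul, Finset.sum_mul]
  exact Finset.sum_congr rfl fun k _ => by ring

lemma one_sub_smul_sq (M : Matrix ι ι ℂ) (c q : ℂ) (hMM : M * M = q • M)
    (hq : c * (c * q) = 2 * c) : (1 - c • M) * (1 - c • M) = 1 := by
  have key : (1 - c • M) * (1 - c • M) = 1 - c • M - c • M + (c * (c * q)) • M := by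
    simp only [Matrix.sub_mul, Matrix.mul_sub, Matrix.one_mul, Matrix.mul_one,
      Matrix.smul_mul, Matrix.mul_smul, hMM, smul_smul, smul_sub]
    abel
  rw [key, hq, two_mul, add_smul]
  abel

lemma rf_mul_self {v : ι → ℂ} (hv : v ⬝ᵥ v ≠ 0) : rf v * rf v = 1 := by
  refine one_sub_smul_sq _ _ _ (vecMulVec_mul_vecMulVec v v v v) ?_
  field_simp

lemma rf_mulVec (v x : ι → ℂ) :
    rf v *ᵥ x = x - (2 * (v ⬝ᵥ x) / (v ⬝ᵥ v)) • v := by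
  have : 2 * (v ⬝ᵥ x) / (v ⬝ᵥ v) = 2 / (v ⬝ᵥ v) * (v ⬝ᵥ x) := by ring
  rw [rf, Matrix.sub_mulVec, Matrix.one_mulVec, Matrix.smul_mulVec, vecMulVec_mulVec,
    smul_smul, this]

lemma rf_det {v : ι → ℂ} (hv : v ⬝ᵥ v ≠ 0) : (rf v).det = -1 := by
  have h1 : rf v = 1 + replicateCol Unit ((-(2 / (v ⬝ᵥ v))) • v) * replicateRow Unit v := by
    rw [rf, sub_eq_add_neg, replicateCol_smul, Matrix.smul_mul, ← vecMulVec_eq, neg_smul]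
  have h2 : v ⬝ᵥ ((-(2 / (v ⬝ᵥ v))) • v) = -2 := by
    rw [dotProduct_smul, smul_eq_mul]
    field_simp
  rw [h1, det_one_add_replicateCol_mul_replicateRow, h2]
  norm_num

/-- The special orthogonal "matrices" set. -/
def SO (ι : Type*) [Fintype ι] [DecidableEq ι] : Set (Matrix ι ι ℂ) :=
  {g | g * gᵀ = 1 ∧ g.det = 1}

lemma one_mem_SO : (1 : Matrix ι ι ℂ) ∈ SO ι := by
  constructor <;> simp

lemma mul_mem_SO {a b : Matrix ι ι ℂ} (ha : a ∈ SO ι) (hb : b ∈ SO ι) : a * b ∈ SO ι := by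
  obtain ⟨ha1, ha2⟩ := ha
  obtain ⟨hb1, hb2⟩ := hb
  refine ⟨?_, by simp [det_mul, ha2, hb2]⟩
  calc a * b * (a * b)ᵀ = a * (b * bᵀ) * aᵀ := by
        rw [transpose_mul]; noncomm_ring
    _ = 1 := by rw [hb1, Matrix.mul_one, ha1]

lemma rf_mem_O {v : ι → ℂ} (hv : v ⬝ᵥ v ≠ 0) : rf v * (rf v)ᵀ = 1 := by
  rw [rf_transpose]; exact rf_mul_self hv

lemma rf_mul_rf_mem_SO {v w : ι → ℂ} (hv : v ⬝ᵥ v ≠ 0) (hw : w ⬝ᵥ w ≠ 0) :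
    rf v * rf w ∈ SO ι := by
  refine ⟨?_, by simp [det_mul, rf_det hv, rf_det hw]⟩
  calc rf v * rf w * (rf v * rf w)ᵀ = rf v * (rf w * (rf w)ᵀ) * (rf v)ᵀ := by
        rw [transpose_mul]; noncomm_ring
    _ = 1 := by rw [rf_mem_O hw, Matrix.mul_one, rf_mem_O hv]

lemma continuousOn_rf : ContinuousOn (rf : (ι → ℂ) → Matrix ι ι ℂ) {v | v ⬝ᵥ v ≠ 0} := by
  rw [continuousOn_iff_continuous_restrict]
  have hval : Continuous fun v : {v : ι → ℂ // v ⬝ᵥ v ≠ 0} => (v : ι → ℂ) :=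
    continuous_subtype_val
  have hdot : Continuous fun v : {v : ι → ℂ // v ⬝ᵥ v ≠ 0} => (v : ι → ℂ) ⬝ᵥ (v : ι → ℂ) :=
    hval.dotProduct hval
  have hdiv : Continuous fun v : {v : ι → ℂ // v ⬝ᵥ v ≠ 0} => 2 / ((v : ι → ℂ) ⬝ᵥ (v : ι → ℂ)) :=
    continuous_const.div hdot fun v => v.2
  exact continuous_const.sub (hdiv.smul (hval.matrix_vecMulVec hval))

/-- Any two anisotropic vectors are joined within the anisotropic set. -/
lemma joinedIn_aniso {v w : ι → ℂ} (hv : v ⬝ᵥ v ≠ 0) (hw : w ⬝ᵥ w ≠ 0) :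
    JoinedIn {u : ι → ℂ | u ⬝ᵥ u ≠ 0} w v := by
  set d : ι → ℂ := v - w with hd
  set f : ℂ → (ι → ℂ) := fun z => w + z • d with hf
  have hquad : ∀ z : ℂ, (f z) ⬝ᵥ (f z)
      = (d ⬝ᵥ d) * z ^ 2 + (2 * (w ⬝ᵥ d)) * z + w ⬝ᵥ w := by
    intro z
    simp only [hf, dotProduct_add, add_dotProduct, dotProduct_smul, smul_dotProduct,
      smul_eq_mul, dotProduct_comm d w]
    ring
  set P : Polynomial ℂ :=
    Polynomial.C (d ⬝ᵥ d) * Polynomial.X ^ 2 + Polynomial.C (2 * (w ⬝ᵥ d)) * Polynomial.X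
      + Polynomial.C (w ⬝ᵥ w) with hP
  have hPne : P ≠ 0 := by
    intro h
    apply hw
    have := congrArg (Polynomial.eval 0) h
    simpa [hP] using this
  have hZ : {z : ℂ | (f z) ⬝ᵥ (f z) = 0}.Countable := by
    apply Set.Countable.mono ?_ (Polynomial.finite_setOf_isRoot hPne).countable
    intro z hz
    simp only [Set.mem_setOf_eq] at hz ⊢
    simp [Polynomial.IsRoot, hP, Polynomial.eval_add, Polynomial.eval_mul, ← hquad z, hz]
  have hpc : IsPathConnected {z : ℂ | (f z) ⬝ᵥ (f z) = 0}ᶜ :=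
    hZ.isPathConnected_compl_of_one_lt_rank (by rw [Complex.rank_real_complex]; norm_num)
  have h0 : (0 : ℂ) ∈ {z : ℂ | (f z) ⬝ᵥ (f z) = 0}ᶜ := by
    simp only [Set.mem_compl_iff, Set.mem_setOf_eq, hf]
    simpa using hw
  have h1 : (1 : ℂ) ∈ {z : ℂ | (f z) ⬝ᵥ (f z) = 0}ᶜ := by
    simp only [Set.mem_compl_iff, Set.mem_setOf_eq, hf, one_smul, hd]
    simpa using hv
  have hj : JoinedIn {z : ℂ | (f z) ⬝ᵥ (f z) = 0}ᶜ 0 1 := hpc.joinedIn _ h0 _ h1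
  have hcf : Continuous f := continuous_const.add (continuous_id.smul continuous_const)
  obtain ⟨γ, hγ⟩ := hj
  have e0 : f (γ 0) = w := by simp [hf]
  have e1 : f (γ 1) = v := by simp [hf, hd]
  refine ⟨⟨⟨fun t => f (γ t), hcf.comp γ.continuous⟩, by simpa using e0, by simpa using e1⟩,
    fun t => hγ t⟩

/-- A product of two reflections is joined to the identity inside `SO`. -/
lemma rf_mul_rf_joined {v w : ι → ℂ} (hv : v ⬝ᵥ v ≠ 0) (hw : w ⬝ᵥ w ≠ 0) :
    JoinedIn (SO ι) (rf v * rf w) 1 := by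
  obtain ⟨γ, hγ⟩ := joinedIn_aniso hv hw
  have hcont : Continuous fun t : unitInterval => rf v * rf (γ t) :=
    continuous_const.matrix_mul
      (continuousOn_rf.comp_continuous γ.continuous fun t => hγ t)
  refine ⟨⟨⟨fun t => rf v * rf (γ t), hcont⟩, ?_, ?_⟩, fun t => rf_mul_rf_mem_SO hv (hγ t)⟩
  · simp [γ.source]
  · simp [γ.target, rf_mul_self hv]

lemma joined_mul {a b : Matrix ι ι ℂ} (ha : JoinedIn (SO ι) a 1) (hb : JoinedIn (SO ι) b 1) :
    JoinedIn (SO ι) (a * b) 1 := by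
  obtain ⟨γ, hγ⟩ := ha
  obtain ⟨δ, hδ⟩ := hb
  refine ⟨⟨⟨fun t => γ t * δ t, γ.continuous.matrix_mul δ.continuous⟩, ?_, ?_⟩,
    fun t => mul_mem_SO (hγ t) (hδ t)⟩
  · simp
  · simp

/-- A product of an even number (forced by `det = 1`) of reflections is joined to `1` in `SO`. -/
theorem joined_of_reflections : ∀ L : List (ι → ℂ), (∀ v ∈ L, v ⬝ᵥ v ≠ 0) →
    ((L.map rf).prod).det = 1 → JoinedIn (SO ι) ((L.map rf).prod) 1
  | [] => fun _ _ => by simpa using JoinedIn.refl one_mem_SO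
  | [v] => fun hL hdet => by
      exfalso
      rw [List.map_singleton, List.prod_singleton, rf_det (hL v (by simp))] at hdet
      norm_num at hdet
  | v :: w :: L => fun hL hdet => by
      have hv : v ⬝ᵥ v ≠ 0 := hL v (by simp)
      have hw : w ⬝ᵥ w ≠ 0 := hL w (by simp)
      have hL' : ∀ u ∈ L, u ⬝ᵥ u ≠ 0 := fun u hu => hL u (by simp [hu])
      have hsplit : ((v :: w :: L).map rf).prod = (rf v * rf w) * (L.map rf).prod := by
        simp [List.prod_cons, mul_assoc]
      have hdet' : ((L.map rf).prod).det = 1 := by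
        rw [hsplit, det_mul, det_mul, rf_det hv, rf_det hw] at hdet
        simpa using hdet
      have := joined_of_reflections L hL' hdet'
      rw [hsplit]
      exact joined_mul (rf_mul_rf_joined hv hw) this

/-- The key reflection computation: if `u, w` have the same length then the reflection in
`u - w` maps `u` to `w`. -/
lemma rf_sub_mulVec {u w : ι → ℂ} (h : u ⬝ᵥ u = w ⬝ᵥ w) (hvv : (u - w) ⬝ᵥ (u - w) ≠ 0) :
    rf (u - w) *ᵥ u = w := by
  have key : 2 * ((u - w) ⬝ᵥ u) = (u - w) ⬝ᵥ (u - w) := by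
    simp only [sub_dotProduct, dotProduct_sub, dotProduct_comm w u, h]
    ring
  rw [rf_mulVec, key, div_self hvv, one_smul, sub_sub_cancel]

lemma mulVec_dot_mulVec {g : Matrix ι ι ℂ} (hg : gᵀ * g = 1) (x y : ι → ℂ) :
    (g *ᵥ x) ⬝ᵥ (g *ᵥ y) = x ⬝ᵥ y := by
  rw [dotProduct_mulVec]
  have h2 : (g *ᵥ x) ᵥ* g = x := by
    rw [← mulVec_transpose, mulVec_mulVec, hg, one_mulVec]
  rw [h2]

section Pad

variable (i₀ : ι)

noncomputable def padM (B : Matrix {x // ¬x = i₀} {x // ¬x = i₀} ℂ) : Matrix ι ι ℂ :=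
  reindexAlgEquiv ℂ ℂ (Equiv.sumCompl (· = i₀)) (fromBlocks 1 0 0 B)

noncomputable def pad (v : {x // ¬x = i₀} → ℂ) : ι → ℂ :=
  Sum.elim 0 v ∘ (Equiv.sumCompl (· = i₀)).symm

lemma padM_mul (B C : Matrix {x // ¬x = i₀} {x // ¬x = i₀} ℂ) :
    padM i₀ B * padM i₀ C = padM i₀ (B * C) := by
  rw [padM, padM, padM, ← _root_.map_mul, fromBlocks_multiply]
  simp

lemma padM_one : padM i₀ (1 : Matrix {x // ¬x = i₀} {x // ¬x = i₀} ℂ) = 1 := by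
  rw [padM, fromBlocks_one, _root_.map_one]

lemma padM_inj {B C : Matrix {x // ¬x = i₀} {x // ¬x = i₀} ℂ}
    (h : padM i₀ B = padM i₀ C) : B = C := by
  have h2 := (reindexAlgEquiv ℂ ℂ (Equiv.sumCompl (· = i₀))).injective h
  have := congrArg Matrix.toBlocks₂₂ h2
  rwa [toBlocks_fromBlocks₂₂, toBlocks_fromBlocks₂₂] at this

lemma padM_transpose (B : Matrix {x // ¬x = i₀} {x // ¬x = i₀} ℂ) :
    (padM i₀ B)ᵀ = padM i₀ Bᵀ := by
  rw [padM, padM, reindexAlgEquiv_apply, reindexAlgEquiv_apply, transpose_reindex,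
    fromBlocks_transpose]
  simp

lemma pad_dot (v w : {x // ¬x = i₀} → ℂ) : pad i₀ v ⬝ᵥ pad i₀ w = v ⬝ᵥ w := by
  rw [dotProduct, ← Equiv.sum_comp (Equiv.sumCompl (· = i₀))]
  simp [pad, Fintype.sum_sum_type, dotProduct]

lemma vecMulVec_pad (v : {x // ¬x = i₀} → ℂ) :
    vecMulVec (pad i₀ v) (pad i₀ v)
      = reindexAlgEquiv ℂ ℂ (Equiv.sumCompl (· = i₀)) (fromBlocks 0 0 0 (vecMulVec v v)) := by
  ext i j
  rw [reindexAlgEquiv_apply, reindex_apply, submatrix_apply]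
  rcases h1 : (Equiv.sumCompl (· = i₀)).symm i with a | a <;>
    rcases h2 : (Equiv.sumCompl (· = i₀)).symm j with b | b <;>
    simp [vecMulVec_apply, pad, h1, h2]

lemma rf_pad {v : {x // ¬x = i₀} → ℂ} :
    rf (pad i₀ v) = padM i₀ (rf v) := by
  rw [rf, rf, pad_dot, vecMulVec_pad, padM]
  have h1 : (1 : Matrix ι ι ℂ)
      = reindexAlgEquiv ℂ ℂ (Equiv.sumCompl (· = i₀)) 1 := (_root_.map_one _).symm
  rw [h1, ← _root_.map_smul, ← _root_.map_sub]
  congr 1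
  rw [← fromBlocks_one, fromBlocks_smul]
  ext i j
  rcases i with a | a <;> rcases j with b | b <;>
    simp [fromBlocks, Matrix.sub_apply]

end Pad



lemma mul_mem_O {a b : Matrix ι ι ℂ} (ha : a * aᵀ = 1) (hb : b * bᵀ = 1) :
    (a * b) * (a * b)ᵀ = 1 := by
  calc a * b * (a * b)ᵀ = a * (b * bᵀ) * aᵀ := by rw [transpose_mul]; noncomm_ring
    _ = 1 := by rw [hb, Matrix.mul_one, ha]

lemma single_dot_single (i₀ : ι) :
    (Pi.single i₀ 1 : ι → ℂ) ⬝ᵥ (Pi.single i₀ 1 : ι → ℂ) = 1 := by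
  rw [dotProduct_single, Pi.single_eq_same, one_mul]

lemma eq_padM {g : Matrix ι ι ℂ} {i₀ : ι}
    (hcol : g *ᵥ Pi.single i₀ 1 = Pi.single i₀ 1)
    (hrow : gᵀ *ᵥ Pi.single i₀ 1 = Pi.single i₀ 1) :
    g = padM i₀ (of fun a b : {x // ¬x = i₀} => g ↑a ↑b) := by
  have hc : ∀ i, g i i₀ = (Pi.single i₀ 1 : ι → ℂ) i := fun i => by
    have := congrFun hcol i
    rw [mulVec_single] at this
    simpa using this
  have hr : ∀ j, g i₀ j = (Pi.single i₀ 1 : ι → ℂ) j := fun j => by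
    have := congrFun hrow j
    rw [mulVec_single] at this
    simpa using this
  ext i j
  rw [padM, reindexAlgEquiv_apply, reindex_apply, submatrix_apply]
  have hi := (Equiv.sumCompl (· = i₀)).apply_symm_apply i
  have hj := (Equiv.sumCompl (· = i₀)).apply_symm_apply j
  rcases h1 : (Equiv.sumCompl (· = i₀)).symm i with a | a <;>
      rcases h2 : (Equiv.sumCompl (· = i₀)).symm j with b | b <;>
      rw [h1] at hi <;> rw [h2] at hj <;>
      simp only [Equiv.sumCompl_apply_inl, Equiv.sumCompl_apply_inr] at hi hj <;>
      subst hi <;> subst hj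
  · rw [fromBlocks_apply₁₁]
    have ha := a.2; have hb := b.2
    rw [show (a : ι) = i₀ from ha, show (b : ι) = i₀ from hb, hr, Pi.single_eq_same]
    have : a = b := Subtype.ext (ha.trans hb.symm)
    simp [this, Matrix.one_apply]
  · rw [fromBlocks_apply₁₂]
    rw [show (a : ι) = i₀ from a.2, hr, Pi.single_eq_of_ne (Ne.symm ?_)]
    · simp
    · exact fun h => b.2 h.symm
  · rw [fromBlocks_apply₂₁]
    rw [show (b : ι) = i₀ from b.2, hc, Pi.single_eq_of_ne a.2]
    simp
  · rw [fromBlocks_apply₂₂, of_apply]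

lemma padM_list_prod (i₀ : ι) (L : List ({x // ¬x = i₀} → ℂ)) :
    padM i₀ ((L.map rf).prod) = ((L.map (pad i₀)).map rf).prod := by
  induction L with
  | nil => simp [padM_one]
  | cons v L ih =>
      simp only [List.map_cons, List.prod_cons]
      rw [← ih, ← padM_mul, rf_pad]

/-- Cartan–Dieudonné over `ℂ` w.r.t. the standard bilinear form. -/
theorem exists_reflections : ∀ (N : ℕ) (ι : Type) [Fintype ι] [DecidableEq ι],
    Fintype.card ι = N → ∀ g : Matrix ι ι ℂ, g * gᵀ = 1 →
    ∃ L : List (ι → ℂ), (∀ v ∈ L, v ⬝ᵥ v ≠ 0) ∧ g = (L.map rf).prod := by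
  intro N
  induction N with
  | zero =>
      intro ι _ _ hcard g hg
      haveI : IsEmpty ι := Fintype.card_eq_zero_iff.mp hcard
      exact ⟨[], by simp, Subsingleton.elim _ _⟩
  | succ N ih =>
      intro ι _ _ hcard g hg
      haveI : Nonempty ι := Fintype.card_pos_iff.mp (by omega)
      obtain ⟨i₀⟩ := ‹Nonempty ι›
      set e0 : ι → ℂ := Pi.single i₀ 1 with he0
      have hgTg : gᵀ * g = 1 := mul_eq_one_comm.mp hg
      set u : ι → ℂ := g *ᵥ e0 with hu
      have hQu : u ⬝ᵥ u = 1 := by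
        rw [hu, mulVec_dot_mulVec hgTg, he0, single_dot_single]
      have he0e0 : e0 ⬝ᵥ e0 = (1 : ℂ) := single_dot_single i₀
      have key : ∃ (P : List (ι → ℂ)) (g' : Matrix ι ι ℂ), (∀ v ∈ P, v ⬝ᵥ v ≠ 0) ∧
          g = (P.map rf).prod * g' ∧ g' * g'ᵀ = 1 ∧ g' *ᵥ e0 = e0 := by
        by_cases hv₁ : (u - e0) ⬝ᵥ (u - e0) ≠ 0
        · refine ⟨[u - e0], rf (u - e0) * g, by simpa using hv₁, ?_, ?_, ?_⟩
          · rw [List.map_singleton, List.prod_singleton, ← mul_assoc,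
              rf_mul_self hv₁, Matrix.one_mul]
          · exact mul_mem_O (rf_mem_O hv₁) hg
          · rw [← mulVec_mulVec, ← hu, rf_sub_mulVec (by rw [hQu, he0e0]) hv₁]
        · push_neg at hv₁
          have hsum : (u - e0) ⬝ᵥ (u - e0) + (u + e0) ⬝ᵥ (u + e0) = 4 := by
            simp only [sub_dotProduct, dotProduct_sub, add_dotProduct, dotProduct_add,
              hQu, he0e0]
            ring
          have hv₂ : (u + e0) ⬝ᵥ (u + e0) ≠ 0 := by
            rw [hv₁, zero_add] at hsum
            rw [hsum]; norm_num
          have he0ne : e0 ⬝ᵥ e0 ≠ (0 : ℂ) := by rw [he0e0]; exact one_ne_zero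
          refine ⟨[u + e0, e0], rf e0 * (rf (u + e0) * g), ?_, ?_, ?_, ?_⟩
          · intro v hv
            rcases List.mem_cons.mp hv with rfl | hv
            · exact hv₂
            · rcases List.mem_singleton.mp hv with rfl
              exact he0ne
          · simp only [List.map_cons, List.prod_cons, List.map_nil, List.prod_nil,
              Matrix.mul_one]
            symm
            calc rf (u + e0) * rf e0 * (rf e0 * (rf (u + e0) * g))
                = rf (u + e0) * (rf e0 * rf e0) * rf (u + e0) * g := by noncomm_ring
              _ = g := by
                  rw [rf_mul_self he0ne, Matrix.mul_one, rf_mul_self hv₂, Matrix.one_mul]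
          · exact mul_mem_O (rf_mem_O he0ne) (mul_mem_O (rf_mem_O hv₂) hg)
          · have hstep : rf (u + e0) *ᵥ u = -e0 := by
              have hdot : (-e0 : ι → ℂ) ⬝ᵥ (-e0) = 1 := by
                rw [neg_dotProduct, dotProduct_neg, he0e0]; ring
              have : u - (-e0) = u + e0 := by ring
              rw [← this]
              exact rf_sub_mulVec (by rw [hQu, hdot]) (by rwa [this])
            have hstep2 : rf e0 *ᵥ (-e0) = e0 := by
              have hre : rf e0 *ᵥ e0 = -e0 := by
                rw [rf_mulVec, he0e0]
                norm_num
                rw [two_smul]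
                abel
              rw [mulVec_neg, hre, neg_neg]
            rw [← mulVec_mulVec, ← mulVec_mulVec, ← hu, hstep, hstep2]
      obtain ⟨P, g', hP, hfac, hO, hfix⟩ := key
      have hfixT : g'ᵀ *ᵥ e0 = e0 := by
        conv_lhs => rw [← hfix]
        rw [mulVec_mulVec, mul_eq_one_comm.mp hO, one_mulVec]
      have hblock := eq_padM (i₀ := i₀) hfix hfixT
      set h : Matrix {x // ¬x = i₀} {x // ¬x = i₀} ℂ :=
        of (fun a b : {x // ¬x = i₀} => g' ↑a ↑b) with hh
      have hOh : h * hᵀ = 1 := by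
        apply padM_inj (i₀ := i₀)
        rw [← padM_mul, ← padM_transpose, ← hblock, padM_one, hO]
      have hcard' : Fintype.card {x // ¬x = i₀} = N := by
        rw [Fintype.card_subtype_compl, Fintype.card_subtype_eq, hcard]
        omega
      obtain ⟨L', hL', hfac'⟩ := ih _ hcard' h hOh
      refine ⟨P ++ L'.map (pad i₀), ?_, ?_⟩
      · intro v hv
        rcases List.mem_append.mp hv with hv | hv
        · exact hP v hv
        · obtain ⟨w, hw, rfl⟩ := List.mem_map.mp hv
          rw [pad_dot]
          exact hL' w hw
      · rw [List.map_append, List.prod_append, ← padM_list_prod, ← hfac',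
          ← hblock, hfac]


/-- Every special orthogonal matrix is joined to the identity within `SO`. -/
lemma joinedIn_SO_one {ι : Type} [Fintype ι] [DecidableEq ι] {g : Matrix ι ι ℂ}
    (hg : g ∈ SO ι) : JoinedIn (SO ι) g 1 := by
  obtain ⟨L, hL, rfl⟩ := exists_reflections (Fintype.card ι) ι rfl g hg.1
  exact joined_of_reflections L hL hg.2

lemma isPreconnected_SO (ι : Type) [Fintype ι] [DecidableEq ι] :
    IsPreconnected (SO ι) := by
  have : IsPathConnected (SO ι) :=
    ⟨1, one_mem_SO, fun {y} hy => (joinedIn_SO_one hy).symm⟩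
  exact this.isConnected.isPreconnected



lemma subsingleton_of_finite_preconnected {α : Type*} [TopologicalSpace α] [T1Space α]
    {U : Set α} (hU : IsPreconnected U) (hfin : U.Finite) : U.Subsingleton := by
  intro a ha b hb
  by_contra hne
  have h1 : IsOpen ((U \ {a} : Set α)ᶜ) := (hfin.subset Set.diff_subset).isClosed.isOpen_compl
  have h2 : IsOpen ({a}ᶜ : Set α) := isOpen_compl_singleton
  obtain ⟨x, hxU, hx1, hx2⟩ := hU _ _ h1 h2
    (fun x hx => by
      by_cases hxa : x = a
      · exact Or.inl (by simp [hxa])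
      · exact Or.inr hxa)
    ⟨a, ha, by simp⟩ ⟨b, hb, fun hba => hne (by simpa using hba.symm)⟩
  exact hx2 (by
    by_contra hxa
    exact hx1 ⟨hxU, hxa⟩)

lemma pow_eq_one_finite (k : ℕ) (hk : k ≠ 0) : {x : ℂ | x ^ k = 1}.Finite := by
  have hp : (Polynomial.X ^ k - Polynomial.C 1 : Polynomial ℂ) ≠ 0 := by
    intro h
    have := congrArg (Polynomial.eval 0) h
    simp [zero_pow hk] at this
  apply Set.Finite.subset (Polynomial.finite_setOf_isRoot hp)
  intro x hx
  simp only [Set.mem_setOf_eq] at hx ⊢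
  simp [Polynomial.IsRoot, sub_eq_zero, hx]

lemma part2_aux {m : ℕ} (s t : ℂˣ) (g : SpecialLinearGroup (Fin 1 ⊕ Fin m) ℂ)
    (A : Matrix (Fin 1 ⊕ Fin m) (Fin 1 ⊕ Fin m) ℂ) (y : Fin 1 ⊕ Fin m → ℂ) :
    ((t : ℂ) • ((g.1⁻¹)ᵀ *ᵥ y)) ⬝ᵥ
        (((s : ℂ) • (g.1 * A * g.1ᵀ)) *ᵥ ((t : ℂ) • ((g.1⁻¹)ᵀ *ᵥ y)))
      = (s : ℂ) * (t : ℂ) ^ 2 * (y ⬝ᵥ (A *ᵥ y)) := by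
  have hdet : IsUnit g.1.det := by rw [g.2]; exact isUnit_one
  have hinv : g.1⁻¹ * g.1 = 1 := Matrix.nonsing_inv_mul g.1 hdet
  have key : g.1ᵀ *ᵥ ((g.1⁻¹)ᵀ *ᵥ y) = y := by
    rw [mulVec_mulVec, ← transpose_mul, hinv, transpose_one, one_mulVec]
  set w : Fin 1 ⊕ Fin m → ℂ := (g.1⁻¹)ᵀ *ᵥ y with hw
  rw [smul_mulVec, mulVec_smul, smul_dotProduct, dotProduct_smul, dotProduct_smul,
    smul_eq_mul, smul_eq_mul, smul_eq_mul]
  have hmid : (g.1 * A * g.1ᵀ) *ᵥ w = g.1 *ᵥ (A *ᵥ y) := by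
    rw [← mulVec_mulVec, ← mulVec_mulVec, key]
  rw [hmid, dotProduct_mulVec, ← mulVec_transpose, key]
  ring


set_option maxHeartbeats 1000000

noncomputable section

variable {m : ℕ}

abbrev eo (m : ℕ) : Fin 1 ⊕ Fin m → ℂ := Sum.elim (fun _ => (1 : ℂ)) (fun _ => 0)

lemma eo_dot : eo m ⬝ᵥ eo m = 1 := by
  simp [eo, dotProduct, Fintype.sum_sum_type]

lemma col_entries {g : Matrix (Fin 1 ⊕ Fin m) (Fin 1 ⊕ Fin m) ℂ}
    (hfix : g *ᵥ eo m = eo m) (i : Fin 1 ⊕ Fin m) : g i (Sum.inl 0) = eo m i := by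
  have := congrFun hfix i
  simpa [mulVec, dotProduct, Fintype.sum_sum_type] using this

/-- An orthogonal matrix fixing `e₀` (and with `e₀ᵀ g = e₀ᵀ`) is block diagonal. -/
lemma block_of_fix {g : Matrix (Fin 1 ⊕ Fin m) (Fin 1 ⊕ Fin m) ℂ}
    (hO : g * gᵀ = 1) (hfix : g *ᵥ eo m = eo m) :
    g = fromBlocks 1 0 0 (g.toBlocks₂₂) := by
  have hfixT : gᵀ *ᵥ eo m = eo m := by
    conv_lhs => rw [← hfix]
    rw [mulVec_mulVec, mul_eq_one_comm.mp hO, one_mulVec]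
  have hc := col_entries hfix
  have hr := col_entries (g := gᵀ) hfixT
  ext i j
  rcases i with a | a <;> rcases j with b | b
  · have ha : a = 0 := Subsingleton.elim _ _
    have hb : b = 0 := Subsingleton.elim _ _
    subst ha; subst hb
    rw [fromBlocks_apply₁₁]
    rw [show g (Sum.inl 0) (Sum.inl 0) = eo m (Sum.inl 0) from hc (Sum.inl 0)]
    simp [eo, Matrix.one_apply]
  · have ha : a = 0 := Subsingleton.elim _ _
    subst ha
    have := hr (Sum.inr b)
    rw [transpose_apply] at this
    rw [fromBlocks_apply₁₂, this]
    simp [eo]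
  · have hb : b = 0 := Subsingleton.elim _ _
    subst hb
    rw [fromBlocks_apply₂₁, hc (Sum.inr a)]
    simp [eo]
  · rw [fromBlocks_apply₂₂, toBlocks₂₂, of_apply]

lemma block_props {g : Matrix (Fin 1 ⊕ Fin m) (Fin 1 ⊕ Fin m) ℂ}
    (hO : g * gᵀ = 1) (hdet : g.det = 1) (hfix : g *ᵥ eo m = eo m) :
    g.toBlocks₂₂ * (g.toBlocks₂₂)ᵀ = 1 ∧ (g.toBlocks₂₂).det = 1 := by
  set h := g.toBlocks₂₂ with hh
  have hb := block_of_fix hO hfix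
  constructor
  · have : fromBlocks (1 : Matrix (Fin 1) (Fin 1) ℂ) 0 0 (h * hᵀ)
        = fromBlocks 1 0 0 (1 : Matrix (Fin m) (Fin m) ℂ) := by
      rw [fromBlocks_one]
      rw [hb] at hO
      rw [← hO, fromBlocks_transpose, fromBlocks_multiply]
      simp
      rfl
    have := congrArg Matrix.toBlocks₂₂ this
    rwa [toBlocks_fromBlocks₂₂, toBlocks_fromBlocks₂₂] at this
  · rw [hb, det_fromBlocks_zero₂₁] at hdet
    simpa using hdet

lemma mem_SO_fromBlocks {h : Matrix (Fin m) (Fin m) ℂ} (hyp : h ∈ SO (Fin m)) :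
    (fromBlocks 1 0 0 h : Matrix (Fin 1 ⊕ Fin m) (Fin 1 ⊕ Fin m) ℂ) * (fromBlocks 1 0 0 h)ᵀ = 1
    ∧ (fromBlocks 1 0 0 h : Matrix (Fin 1 ⊕ Fin m) (Fin 1 ⊕ Fin m) ℂ).det = 1 := by
  constructor
  · rw [fromBlocks_transpose, fromBlocks_multiply]
    simpa [hyp.1] using fromBlocks_one
  · rw [det_fromBlocks_zero₂₁]
    simp [hyp.2]

lemma fromBlocks_fix (h : Matrix (Fin m) (Fin m) ℂ) :
    (fromBlocks 1 0 0 h : Matrix (Fin 1 ⊕ Fin m) (Fin 1 ⊕ Fin m) ℂ) *ᵥ eo m = eo m := by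
  rw [show eo m = Sum.elim ((fun _ => 1) : Fin 1 → ℂ) ((fun _ => 0) : Fin m → ℂ) from rfl]
  rw [fromBlocks_mulVec]
  simp only [Sum.elim_comp_inl, Sum.elim_comp_inr]
  have h0 : ((fun _ => 0) : Fin m → ℂ) = 0 := rfl
  rw [h0, mulVec_zero, mulVec_zero, one_mulVec, add_zero, zero_mulVec, zero_add]

end


end Ks112


/-- The subspace topology on `SL n ℂ` inside the matrix space. -/
noncomputable instance (n : Type*) [DecidableEq n] [Fintype n] :
    TopologicalSpace (Matrix.SpecialLinearGroup n ℂ) :=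
  TopologicalSpace.induced (fun g => (g : Matrix n n ℂ)) inferInstance

/-- Ks I-12 (with `n = m + 1 ≥ 3`, coordinates split as `ℂⁿ = ℂ ⊕ ℂᵐ`):
for the action of `GL₁² × SL n` on `Sym² ℂⁿ ⊕ (ℂⁿ)*` by
`(s, t, g) · (A, y) = (s • g A gᵀ, t • (g⁻¹)ᵀ y)`, the polynomials
`f₁(A, y) = det A` and `f₂(A, y) = yᵀ A y` are relative invariants (with
characters `sⁿ` and `s t²`), and the connected component of the identity in
the stabilizer of the generic point `(I, e₁*)` is the copy of `SO (n-1) ℂ`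
embedded as `g = fromBlocks 1 0 0 h`. -/
theorem ks_I_12_generic_isotropy (m : ℕ) (hm : 2 ≤ m) :
    (∀ (s : ℂˣ) (g : SpecialLinearGroup (Fin 1 ⊕ Fin m) ℂ)
        (A : Matrix (Fin 1 ⊕ Fin m) (Fin 1 ⊕ Fin m) ℂ), A.IsSymm →
      ((s : ℂ) • (g.1 * A * g.1ᵀ)).det = (s : ℂ) ^ (m + 1) * A.det) ∧
    (∀ (s t : ℂˣ) (g : SpecialLinearGroup (Fin 1 ⊕ Fin m) ℂ)
        (A : Matrix (Fin 1 ⊕ Fin m) (Fin 1 ⊕ Fin m) ℂ) (y : Fin 1 ⊕ Fin m → ℂ),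
      A.IsSymm →
      ((t : ℂ) • ((g.1⁻¹)ᵀ *ᵥ y)) ⬝ᵥ
          (((s : ℂ) • (g.1 * A * g.1ᵀ)) *ᵥ ((t : ℂ) • ((g.1⁻¹)ᵀ *ᵥ y)))
        = (s : ℂ) * (t : ℂ) ^ 2 * (y ⬝ᵥ (A *ᵥ y))) ∧
    connectedComponentIn
        {p : ℂˣ × ℂˣ × SpecialLinearGroup (Fin 1 ⊕ Fin m) ℂ |
          (p.1 : ℂ) • (p.2.2.1 * 1 * p.2.2.1ᵀ) = (1 : Matrix (Fin 1 ⊕ Fin m) (Fin 1 ⊕ Fin m) ℂ) ∧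
          (p.2.1 : ℂ) • ((p.2.2.1⁻¹)ᵀ *ᵥ Sum.elim (fun _ => (1 : ℂ)) (fun _ => 0))
            = Sum.elim (fun _ => (1 : ℂ)) (fun _ => 0)} 1
      = {p : ℂˣ × ℂˣ × SpecialLinearGroup (Fin 1 ⊕ Fin m) ℂ |
          p.1 = 1 ∧ p.2.1 = 1 ∧
          ∃ h : Matrix (Fin m) (Fin m) ℂ, h * hᵀ = 1 ∧ h.det = 1 ∧
            p.2.2.1 = Matrix.fromBlocks 1 0 0 h} := by
  classical
  have hcard : Fintype.card (Fin 1 ⊕ Fin m) = m + 1 := by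
    simp [add_comm]
  refine ⟨?_, ?_, ?_⟩
  · intro s g A _
    rw [det_smul, hcard, det_mul, det_mul, det_transpose, g.2]
    ring
  · intro s t g A y _
    exact Ks112.part2_aux s t g A y
  · set G := ℂˣ × ℂˣ × SpecialLinearGroup (Fin 1 ⊕ Fin m) ℂ with hG
    set S : Set G := {p : G |
          (p.1 : ℂ) • (p.2.2.1 * 1 * p.2.2.1ᵀ) = (1 : Matrix (Fin 1 ⊕ Fin m) (Fin 1 ⊕ Fin m) ℂ) ∧
          (p.2.1 : ℂ) • ((p.2.2.1⁻¹)ᵀ *ᵥ Sum.elim (fun _ => (1 : ℂ)) (fun _ => 0))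
            = Sum.elim (fun _ => (1 : ℂ)) (fun _ => 0)} with hSdef
    have h1S : (1 : G) ∈ S := by
      constructor
      · simp
      · simp
    -- scalar constraints on the stabilizer
    have stab_scalar : ∀ q ∈ S, ((q.1 : ℂ)) ^ (m + 1) = 1 ∧ ((q.2.1 : ℂ)) ^ (2 * (m + 1)) = 1 := by
      intro q hq
      obtain ⟨hc1, hc2⟩ := hq
      have hdet := congrArg Matrix.det hc1
      rw [det_smul, hcard, det_mul, det_mul, det_transpose, q.2.2.2, det_one] at hdet
      have hs : ((q.1 : ℂ)) ^ (m + 1) = 1 := by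
        rw [← hdet]; ring
      refine ⟨hs, ?_⟩
      have hpart2 := Ks112.part2_aux q.1 q.2.1 q.2.2 1 (Sum.elim (fun _ => (1 : ℂ)) (fun _ => 0))
      rw [hc2, hc1, one_mulVec] at hpart2
      rw [show (Sum.elim (fun _ => (1 : ℂ)) (fun _ => 0)) ⬝ᵥ (Sum.elim (fun _ => (1 : ℂ)) (fun _ => 0)) = 1 from Ks112.eo_dot] at hpart2
      rw [mul_one] at hpart2
      have hst : (q.1 : ℂ) * (q.2.1 : ℂ) ^ 2 = 1 := hpart2.symm
      have hpow := congrArg (· ^ (m + 1)) hst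
      simp only [mul_pow, one_pow] at hpow
      have h2 : ((q.2.1 : ℂ) ^ 2) ^ (m + 1) = 1 := by
        calc ((q.2.1 : ℂ) ^ 2) ^ (m + 1)
            = (q.1 : ℂ) ^ (m + 1) * ((q.2.1 : ℂ) ^ 2) ^ (m + 1) := by rw [hs, one_mul]
          _ = 1 := hpow
      rw [pow_mul]
      exact h2
    apply subset_antisymm
    · -- the connected component has constant scalars, then is block diagonal
      have hCS : connectedComponentIn S 1 ⊆ S := connectedComponentIn_subset _ _
      have hconst : ∀ q ∈ connectedComponentIn S 1, ((q.1 : ℂ), (q.2.1 : ℂ)) = (1, 1) := by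
        have hpre : IsPreconnected (connectedComponentIn S 1) :=
          isPreconnected_connectedComponentIn
        have hcont : Continuous (fun q : G => ((q.1 : ℂ), (q.2.1 : ℂ))) :=
          (Units.continuous_val.comp continuous_fst).prodMk
            (Units.continuous_val.comp (continuous_fst.comp continuous_snd))
        have himg : IsPreconnected
            ((fun q : G => ((q.1 : ℂ), (q.2.1 : ℂ))) '' connectedComponentIn S 1) :=
          hpre.image _ hcont.continuousOn
        have hfin : ((fun q : G => ((q.1 : ℂ), (q.2.1 : ℂ))) '' connectedComponentIn S 1).Finite := by
          apply Set.Finite.subset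
            (Set.Finite.prod (Ks112.pow_eq_one_finite (m + 1) (by omega))
              (Ks112.pow_eq_one_finite (2 * (m + 1)) (by omega)))
          rintro z ⟨q, hq, rfl⟩
          obtain ⟨h1, h2⟩ := stab_scalar q (hCS hq)
          exact ⟨h1, h2⟩
        have hsub := Ks112.subsingleton_of_finite_preconnected himg hfin
        intro q hq
        have h11 : ((1 : ℂ), (1 : ℂ)) ∈
            (fun q : G => ((q.1 : ℂ), (q.2.1 : ℂ))) '' connectedComponentIn S 1 :=
          ⟨1, mem_connectedComponentIn h1S, by simp⟩
        exact hsub ⟨q, hq, rfl⟩ h11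
      intro p hp
      obtain ⟨hc1, hc2⟩ := hCS hp
      have hpq := hconst p hp
      have hs1 : (p.1 : ℂ) = 1 := congrArg Prod.fst hpq
      have ht1 : (p.2.1 : ℂ) = 1 := congrArg Prod.snd hpq
      rw [hs1, one_smul, Matrix.mul_one] at hc1
      rw [ht1, one_smul] at hc2
      have hinv : p.2.2.1⁻¹ = p.2.2.1ᵀ := Matrix.inv_eq_right_inv hc1
      rw [hinv, transpose_transpose] at hc2
      have hbp := Ks112.block_props hc1 p.2.2.2 hc2
      exact ⟨Units.ext hs1, Units.ext ht1, p.2.2.1.toBlocks₂₂, hbp.1, hbp.2,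
        Ks112.block_of_fix hc1 hc2⟩
    · -- the embedded SO(m) is preconnected and sits inside the stabilizer
      set σ : Matrix (Fin m) (Fin m) ℂ → SpecialLinearGroup (Fin 1 ⊕ Fin m) ℂ := fun h =>
        if H : (fromBlocks 1 0 0 h : Matrix (Fin 1 ⊕ Fin m) (Fin 1 ⊕ Fin m) ℂ).det = 1
          then ⟨_, H⟩ else 1 with hσ
      set ψ : Matrix (Fin m) (Fin m) ℂ → G := fun h => ((1 : ℂˣ), (1 : ℂˣ), σ h) with hψdef
      have hσcoe : ∀ h ∈ Ks112.SO (Fin m),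
          ((σ h : SpecialLinearGroup (Fin 1 ⊕ Fin m) ℂ) : Matrix (Fin 1 ⊕ Fin m) (Fin 1 ⊕ Fin m) ℂ)
            = fromBlocks 1 0 0 h := by
        intro h hh
        have H := (Ks112.mem_SO_fromBlocks hh).2
        simp only [hσ]
        exact congrArg Subtype.val (dif_pos H)
      have hTimg : {p : G |
          p.1 = 1 ∧ p.2.1 = 1 ∧
          ∃ h : Matrix (Fin m) (Fin m) ℂ, h * hᵀ = 1 ∧ h.det = 1 ∧
            p.2.2.1 = Matrix.fromBlocks 1 0 0 h} = ψ '' Ks112.SO (Fin m) := by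
        ext p
        constructor
        · rintro ⟨hp1, hp2, h, hOh, hdeth, hgb⟩
          refine ⟨h, ⟨hOh, hdeth⟩, ?_⟩
          have hσh : σ h = p.2.2 :=
            Subtype.ext (by rw [hσcoe h ⟨hOh, hdeth⟩]; exact hgb.symm)
          show ((1 : ℂˣ), (1 : ℂˣ), σ h) = p
          rw [hσh]
          exact Prod.ext hp1.symm (Prod.ext hp2.symm rfl)
        · rintro ⟨h, hh, rfl⟩
          exact ⟨rfl, rfl, h, hh.1, hh.2, hσcoe h hh⟩
      have hψcont : ContinuousOn ψ (Ks112.SO (Fin m)) := by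
        refine ContinuousOn.prodMk continuousOn_const (ContinuousOn.prodMk continuousOn_const ?_)
        rw [continuousOn_iff_continuous_restrict]
        apply continuous_induced_rng.mpr
        have hcontB : Continuous
            (fun x : Ks112.SO (Fin m) =>
              (fromBlocks 1 0 0 (x : Matrix (Fin m) (Fin m) ℂ) :
                Matrix (Fin 1 ⊕ Fin m) (Fin 1 ⊕ Fin m) ℂ)) :=
          Continuous.matrix_fromBlocks continuous_const continuous_const continuous_const
            continuous_subtype_val
        exact hcontB.congr (fun x => (hσcoe x.1 x.2).symm)
      have hTpre : IsPreconnected (ψ '' Ks112.SO (Fin m)) :=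
        (Ks112.isPreconnected_SO (Fin m)).image ψ hψcont
      rw [hTimg]
      apply hTpre.subset_connectedComponentIn
      · refine ⟨1, Ks112.one_mem_SO, ?_⟩
        have hσ1 : σ 1 = 1 := by
          apply Subtype.ext
          rw [hσcoe 1 Ks112.one_mem_SO, fromBlocks_one]
          rfl
        show ((1 : ℂˣ), (1 : ℂˣ), σ 1) = 1
        rw [hσ1]
        rfl
      · rintro p ⟨h, hh, rfl⟩
        have hOg := Ks112.mem_SO_fromBlocks hh
        constructor
        · simp only [hψdef]
          rw [Units.val_one, one_smul, Matrix.mul_one, hσcoe h hh]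
          exact hOg.1
        · simp only [hψdef]
          rw [Units.val_one, one_smul, hσcoe h hh,
            Matrix.inv_eq_right_inv hOg.1, transpose_transpose]
          exact Ks112.fromBlocks_fix h
end

section
/- For the module (GL₁² × SL_{2n}(ℂ)) acting on ⋀²ℂ^{2n} ⊕ ℂ^{2n} by (s,t,g)·(A,x) = (s·gAgᵀ, t·gx) (alternating matrices with congruence action plus the standard vector action), the Pfaffian f(A,x) = Pf(A) is a relative invariant, and the generic stabilizer contains a subgroup isomorphic to Sp_{2n−2}(ℂ); in particular the set {(A,x) | Pf(A) ≠ 0, x ≠ 0} contains a dense orbit. -/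
open Matrix MvPolynomial

namespace KsII4

abbrev Idx (m : ℕ) := Fin m ⊕ Fin m

variable {m : ℕ}

/-- The Pfaffian as a polynomial in the matrix entries. -/
noncomputable def Pf (m : ℕ) : MvPolynomial (Idx m × Idx m) ℂ :=
  C ((-1 : ℂ) ^ m * ((2 ^ m * m.factorial : ℂ))⁻¹) *
    ∑ σ : Equiv.Perm (Idx m), C ((Equiv.Perm.sign σ : ℤ) : ℂ) *
      ∏ i : Fin m, X (σ (Sum.inl i), σ (Sum.inr i))

lemma eval_Pf (f : Idx m × Idx m → ℂ) :
    eval f (Pf m) = (-1 : ℂ) ^ m * ((2 ^ m * m.factorial : ℂ))⁻¹ *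
      ∑ σ : Equiv.Perm (Idx m), ((Equiv.Perm.sign σ : ℤ) : ℂ) *
        ∏ i : Fin m, f (σ (Sum.inl i), σ (Sum.inr i)) := by
  simp [Pf]

/-- The base multilinear map `r ↦ ∏ i, ω (r (inl i)) (r (inr i))` where
`ω u v = u ⬝ᵥ (J *ᵥ v)`. -/
noncomputable def mBase (m : ℕ) : MultilinearMap ℂ (fun _ : Idx m => (Idx m → ℂ)) ℂ where
  toFun r := ∏ i : Fin m, (r (Sum.inl i)) ⬝ᵥ (J (Fin m) ℂ *ᵥ r (Sum.inr i))
  map_update_add' := by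
    intro _ r a x y
    rcases a with i₀ | i₀
    · rw [← Finset.mul_prod_erase Finset.univ _ (Finset.mem_univ i₀),
        ← Finset.mul_prod_erase Finset.univ _ (Finset.mem_univ i₀),
        ← Finset.mul_prod_erase Finset.univ _ (Finset.mem_univ i₀)]
      have hprod : ∀ z : Idx m → ℂ,
          (∏ i ∈ Finset.univ.erase i₀,
            (Function.update r (Sum.inl i₀) z (Sum.inl i)) ⬝ᵥ
              (J (Fin m) ℂ *ᵥ Function.update r (Sum.inl i₀) z (Sum.inr i)))
          = ∏ i ∈ Finset.univ.erase i₀,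
              (r (Sum.inl i)) ⬝ᵥ (J (Fin m) ℂ *ᵥ r (Sum.inr i)) := by
        intro z
        refine Finset.prod_congr rfl fun i hi => ?_
        have hne : i ≠ i₀ := Finset.ne_of_mem_erase hi
        rw [Function.update_of_ne (by simpa using hne),
          Function.update_of_ne (by simp)]
      rw [hprod, hprod, hprod]
      simp only [Function.update_self, Function.update_of_ne (by simp :
        (Sum.inr i₀ : Idx m) ≠ Sum.inl i₀)]
      rw [add_dotProduct, add_mul]
    · rw [← Finset.mul_prod_erase Finset.univ _ (Finset.mem_univ i₀),
        ← Finset.mul_prod_erase Finset.univ _ (Finset.mem_univ i₀),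
        ← Finset.mul_prod_erase Finset.univ _ (Finset.mem_univ i₀)]
      have hprod : ∀ z : Idx m → ℂ,
          (∏ i ∈ Finset.univ.erase i₀,
            (Function.update r (Sum.inr i₀) z (Sum.inl i)) ⬝ᵥ
              (J (Fin m) ℂ *ᵥ Function.update r (Sum.inr i₀) z (Sum.inr i)))
          = ∏ i ∈ Finset.univ.erase i₀,
              (r (Sum.inl i)) ⬝ᵥ (J (Fin m) ℂ *ᵥ r (Sum.inr i)) := by
        intro z
        refine Finset.prod_congr rfl fun i hi => ?_
        have hne : i ≠ i₀ := Finset.ne_of_mem_erase hi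
        rw [Function.update_of_ne (by simp),
          Function.update_of_ne (by simpa using hne)]
      rw [hprod, hprod, hprod]
      simp only [Function.update_self, Function.update_of_ne (by simp :
        (Sum.inl i₀ : Idx m) ≠ Sum.inr i₀)]
      rw [mulVec_add, dotProduct_add, add_mul]
  map_update_smul' := by
    intro _ r a c x
    rcases a with i₀ | i₀
    · rw [← Finset.mul_prod_erase Finset.univ _ (Finset.mem_univ i₀),
        ← Finset.mul_prod_erase Finset.univ _ (Finset.mem_univ i₀)]
      have hprod : ∀ z : Idx m → ℂ,
          (∏ i ∈ Finset.univ.erase i₀,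
            (Function.update r (Sum.inl i₀) z (Sum.inl i)) ⬝ᵥ
              (J (Fin m) ℂ *ᵥ Function.update r (Sum.inl i₀) z (Sum.inr i)))
          = ∏ i ∈ Finset.univ.erase i₀,
              (r (Sum.inl i)) ⬝ᵥ (J (Fin m) ℂ *ᵥ r (Sum.inr i)) := by
        intro z
        refine Finset.prod_congr rfl fun i hi => ?_
        have hne : i ≠ i₀ := Finset.ne_of_mem_erase hi
        rw [Function.update_of_ne (by simpa using hne),
          Function.update_of_ne (by simp)]
      rw [hprod, hprod]
      simp only [Function.update_self, Function.update_of_ne (by simp :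
        (Sum.inr i₀ : Idx m) ≠ Sum.inl i₀)]
      rw [smul_dotProduct, smul_eq_mul, smul_eq_mul, mul_assoc]
    · rw [← Finset.mul_prod_erase Finset.univ _ (Finset.mem_univ i₀),
        ← Finset.mul_prod_erase Finset.univ _ (Finset.mem_univ i₀)]
      have hprod : ∀ z : Idx m → ℂ,
          (∏ i ∈ Finset.univ.erase i₀,
            (Function.update r (Sum.inr i₀) z (Sum.inl i)) ⬝ᵥ
              (J (Fin m) ℂ *ᵥ Function.update r (Sum.inr i₀) z (Sum.inr i)))
          = ∏ i ∈ Finset.univ.erase i₀,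
              (r (Sum.inl i)) ⬝ᵥ (J (Fin m) ℂ *ᵥ r (Sum.inr i)) := by
        intro z
        refine Finset.prod_congr rfl fun i hi => ?_
        have hne : i ≠ i₀ := Finset.ne_of_mem_erase hi
        rw [Function.update_of_ne (by simp),
          Function.update_of_ne (by simpa using hne)]
      rw [hprod, hprod]
      simp only [Function.update_self, Function.update_of_ne (by simp :
        (Sum.inl i₀ : Idx m) ≠ Sum.inr i₀)]
      rw [mulVec_smul, dotProduct_smul, smul_eq_mul, smul_eq_mul, mul_assoc]

lemma mBase_apply (r : Idx m → (Idx m → ℂ)) :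
    mBase m r = ∏ i : Fin m, (r (Sum.inl i)) ⬝ᵥ (J (Fin m) ℂ *ᵥ r (Sum.inr i)) := rfl

lemma J_inl_inl (i j : Fin m) : J (Fin m) ℂ (Sum.inl i) (Sum.inl j) = 0 := by
  simp [Matrix.J]

lemma J_inr_inr (i j : Fin m) : J (Fin m) ℂ (Sum.inr i) (Sum.inr j) = 0 := by
  simp [Matrix.J]

lemma J_inl_inr (i j : Fin m) :
    J (Fin m) ℂ (Sum.inl i) (Sum.inr j) = if i = j then -1 else 0 := by
  simp [Matrix.J, Matrix.one_apply]
  split <;> simp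

lemma J_inr_inl (i j : Fin m) :
    J (Fin m) ℂ (Sum.inr i) (Sum.inl j) = if i = j then 1 else 0 := by
  simp [Matrix.J, Matrix.one_apply]

/-- The permutation of `Idx m` swapping `inl i ↔ inr i` for `i ∈ s`. -/
def flip (s : Finset (Fin m)) : Equiv.Perm (Idx m) where
  toFun := Sum.elim (fun i => if i ∈ s then Sum.inr i else Sum.inl i)
    (fun i => if i ∈ s then Sum.inl i else Sum.inr i)
  invFun := Sum.elim (fun i => if i ∈ s then Sum.inr i else Sum.inl i)
    (fun i => if i ∈ s then Sum.inl i else Sum.inr i)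
  left_inv := by rintro (i | i) <;> by_cases h : i ∈ s <;> simp [h]
  right_inv := by rintro (i | i) <;> by_cases h : i ∈ s <;> simp [h]

lemma flip_inl (s : Finset (Fin m)) (i : Fin m) :
    flip s (Sum.inl i) = if i ∈ s then Sum.inr i else Sum.inl i := rfl

lemma flip_inr (s : Finset (Fin m)) (i : Fin m) :
    flip s (Sum.inr i) = if i ∈ s then Sum.inl i else Sum.inr i := rfl

lemma flip_empty : flip (∅ : Finset (Fin m)) = 1 := by
  ext x
  rcases x with i | i <;> simp [flip]

lemma flip_insert (a : Fin m) (s : Finset (Fin m)) (ha : a ∉ s) :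
    flip (insert a s) = Equiv.swap (Sum.inl a) (Sum.inr a) * flip s := by
  ext x
  rcases x with i | i <;> by_cases hia : i = a
  · subst hia
    simp [Equiv.Perm.mul_apply, flip_inl, ha]
  · by_cases his : i ∈ s <;>
      simp [Equiv.Perm.mul_apply, flip_inl, his, hia,
        Equiv.swap_apply_of_ne_of_ne, Sum.inl_injective.ne hia, Sum.inr_injective.ne hia]
  · subst hia
    simp [Equiv.Perm.mul_apply, flip_inr, ha]
  · by_cases his : i ∈ s <;>
      simp [Equiv.Perm.mul_apply, flip_inr, his, hia,
        Equiv.swap_apply_of_ne_of_ne, Sum.inl_injective.ne hia, Sum.inr_injective.ne hia]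

lemma sign_flip (s : Finset (Fin m)) :
    Equiv.Perm.sign (flip s) = (-1) ^ s.card := by
  classical
  induction s using Finset.induction_on with
  | empty => simp [flip_empty]
  | @insert a s ha ih =>
    rw [flip_insert a s ha, _root_.map_mul, ih, Equiv.Perm.sign_swap (by simp),
      Finset.card_insert_of_notMem ha, pow_succ]
    exact mul_comm _ _

/-- Permutations sending each pair `(inl i, inr i)` to a pair `(inl k, inr k)`
up to orientation. -/
def goodPerm (π : Equiv.Perm (Fin m)) (s : Finset (Fin m)) : Equiv.Perm (Idx m) :=
  flip s * Equiv.sumCongr π π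

lemma goodPerm_inl (π : Equiv.Perm (Fin m)) (s : Finset (Fin m)) (i : Fin m) :
    goodPerm π s (Sum.inl i) = if π i ∈ s then Sum.inr (π i) else Sum.inl (π i) := rfl

lemma goodPerm_inr (π : Equiv.Perm (Fin m)) (s : Finset (Fin m)) (i : Fin m) :
    goodPerm π s (Sum.inr i) = if π i ∈ s then Sum.inl (π i) else Sum.inr (π i) := rfl

lemma sign_goodPerm (π : Equiv.Perm (Fin m)) (s : Finset (Fin m)) :
    Equiv.Perm.sign (goodPerm π s) = (-1) ^ s.card := by
  rw [goodPerm, _root_.map_mul, sign_flip, Equiv.Perm.sign_sumCongr, Int.units_mul_self, mul_one]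

lemma goodPerm_injective :
    Function.Injective (fun pe : Equiv.Perm (Fin m) × Finset (Fin m) =>
      goodPerm pe.1 pe.2) := by
  rintro ⟨π, s⟩ ⟨π', s'⟩ h
  simp only at h
  have hπ : π = π' := by
    refine Equiv.ext fun i => ?_
    have := congrArg (fun σ : Equiv.Perm (Idx m) => Sum.elim id id (σ (Sum.inl i))) h
    simpa only [goodPerm_inl, apply_ite (Sum.elim (id : Fin m → Fin m) id),
      Sum.elim_inl, Sum.elim_inr, id_eq, ite_self] using this
  subst hπ
  have hs : s = s' := by
    ext k
    have := congrArg (fun σ : Equiv.Perm (Idx m) => σ (Sum.inl (π.symm k))) h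
    simp only [goodPerm_inl, Equiv.apply_symm_apply] at this
    by_cases h1 : k ∈ s <;> by_cases h2 : k ∈ s' <;> simp [h1, h2] at this ⊢
  rw [hs]

lemma exists_goodPerm_of_ne_zero (σ : Equiv.Perm (Idx m))
    (h : ∀ i : Fin m, J (Fin m) ℂ (σ (Sum.inl i)) (σ (Sum.inr i)) ≠ 0) :
    ∃ π s, σ = goodPerm π s := by
  classical
  have hpair : ∀ i : Fin m,
      (∃ k, σ (Sum.inl i) = Sum.inl k ∧ σ (Sum.inr i) = Sum.inr k) ∨
      (∃ k, σ (Sum.inl i) = Sum.inr k ∧ σ (Sum.inr i) = Sum.inl k) := by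
    intro i
    specialize h i
    rcases hσl : σ (Sum.inl i) with k | k <;> rcases hσr : σ (Sum.inr i) with l | l <;>
      rw [hσl, hσr] at h
    · rw [J_inl_inl] at h; exact absurd rfl h
    · rw [J_inl_inr] at h
      have : k = l := by by_contra hkl; simp [hkl] at h
      exact Or.inl ⟨k, rfl, by rw [this]⟩
    · rw [J_inr_inl] at h
      have : k = l := by by_contra hkl; simp [hkl] at h
      exact Or.inr ⟨k, rfl, by rw [this]⟩
    · rw [J_inr_inr] at h; exact absurd rfl h
  set p : Fin m → Fin m := fun i => Sum.elim id id (σ (Sum.inl i)) with hp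
  have hpval : ∀ i : Fin m,
      (σ (Sum.inl i) = Sum.inl (p i) ∧ σ (Sum.inr i) = Sum.inr (p i)) ∨
      (σ (Sum.inl i) = Sum.inr (p i) ∧ σ (Sum.inr i) = Sum.inl (p i)) := by
    intro i
    rcases hpair i with ⟨k, h1, h2⟩ | ⟨k, h1, h2⟩
    · left; constructor <;> rw [hp] <;> simp [h1, h2]
    · right; constructor <;> rw [hp] <;> simp [h1, h2]
  have hinj : Function.Injective p := by
    intro i j hij
    rcases hpval i with ⟨h1, h2⟩ | ⟨h1, h2⟩ <;> rcases hpval j with ⟨h3, h4⟩ | ⟨h3, h4⟩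
    · have : σ (Sum.inl i) = σ (Sum.inl j) := by rw [h1, h3, hij]
      exact Sum.inl_injective (σ.injective this)
    · have : σ (Sum.inl i) = σ (Sum.inr j) := by rw [h1, h4, hij]
      exact absurd (σ.injective this) (by simp)
    · have : σ (Sum.inl i) = σ (Sum.inr j) := by rw [h1, h4, hij]
      exact absurd (σ.injective this) (by simp)
    · have : σ (Sum.inl i) = σ (Sum.inl j) := by rw [h1, h3, hij]
      exact Sum.inl_injective (σ.injective this)
  let π : Equiv.Perm (Fin m) := Equiv.ofBijective p (Finite.injective_iff_bijective.mp hinj)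
  have hπ : ∀ i, π i = p i := fun i => rfl
  refine ⟨π, Finset.univ.filter (fun k => σ (Sum.inl (π.symm k)) = Sum.inr k), ?_⟩
  ext x
  rcases x with i | i
  · rw [goodPerm_inl]
    have hmem : (π i ∈ Finset.univ.filter
        (fun k => σ (Sum.inl (π.symm k)) = Sum.inr k)) ↔ σ (Sum.inl i) = Sum.inr (p i) := by
      have hsymm : π.symm (p i) = i := by rw [← hπ i, Equiv.symm_apply_apply]
      simp only [Finset.mem_filter, Finset.mem_univ, true_and, hπ, hsymm]
    rcases hpval i with ⟨h1, _⟩ | ⟨h1, _⟩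
    · rw [if_neg, h1, hπ]
      rw [hmem, h1]
      simp
    · rw [if_pos, h1, hπ]
      rw [hmem, h1]
  · rw [goodPerm_inr]
    have hmem : (π i ∈ Finset.univ.filter
        (fun k => σ (Sum.inl (π.symm k)) = Sum.inr k)) ↔ σ (Sum.inl i) = Sum.inr (p i) := by
      have hsymm : π.symm (p i) = i := by rw [← hπ i, Equiv.symm_apply_apply]
      simp only [Finset.mem_filter, Finset.mem_univ, true_and, hπ, hsymm]
    rcases hpval i with ⟨h1, h2⟩ | ⟨h1, h2⟩
    · rw [if_neg, h2, hπ]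
      rw [hmem, h1]
      simp
    · rw [if_pos, h2, hπ]
      rw [hmem, h1]

lemma core_sum :
    ∑ σ : Equiv.Perm (Idx m), ((Equiv.Perm.sign σ : ℤ) : ℂ) *
        ∏ i : Fin m, J (Fin m) ℂ (σ (Sum.inl i)) (σ (Sum.inr i)) =
      (-1) ^ m * (2 ^ m * m.factorial) := by
  classical
  have himage : (∑ σ : Equiv.Perm (Idx m), ((Equiv.Perm.sign σ : ℤ) : ℂ) *
        ∏ i : Fin m, J (Fin m) ℂ (σ (Sum.inl i)) (σ (Sum.inr i))) =
      ∑ σ ∈ (Finset.univ : Finset (Equiv.Perm (Fin m) × Finset (Fin m))).image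
        (fun pe => goodPerm pe.1 pe.2), ((Equiv.Perm.sign σ : ℤ) : ℂ) *
        ∏ i : Fin m, J (Fin m) ℂ (σ (Sum.inl i)) (σ (Sum.inr i)) := by
    refine (Finset.sum_subset (Finset.subset_univ _) ?_).symm
    intro σ _ hσ
    rcases eq_or_ne (∏ i : Fin m, J (Fin m) ℂ (σ (Sum.inl i)) (σ (Sum.inr i))) 0 with
      h0 | hprod
    · rw [h0, mul_zero]
    · exfalso
      have hfac : ∀ i : Fin m, J (Fin m) ℂ (σ (Sum.inl i)) (σ (Sum.inr i)) ≠ 0 := by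
        intro i h0
        exact hprod (Finset.prod_eq_zero (Finset.mem_univ i) h0)
      obtain ⟨π, s, rfl⟩ := exists_goodPerm_of_ne_zero σ hfac
      exact hσ (Finset.mem_image.mpr ⟨⟨π, s⟩, Finset.mem_univ _, rfl⟩)
  rw [himage, Finset.sum_image (fun a _ b _ hab => goodPerm_injective hab)]
  have hterm : ∀ pe : Equiv.Perm (Fin m) × Finset (Fin m),
      ((Equiv.Perm.sign (goodPerm pe.1 pe.2) : ℤ) : ℂ) *
        ∏ i : Fin m, J (Fin m) ℂ ((goodPerm pe.1 pe.2) (Sum.inl i))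
          ((goodPerm pe.1 pe.2) (Sum.inr i)) = (-1) ^ m := by
    rintro ⟨π, s⟩
    have hsign : ((Equiv.Perm.sign (goodPerm π s) : ℤ) : ℂ) = (-1) ^ s.card := by
      rw [sign_goodPerm]
      push_cast
      rfl
    have hprod : ∏ i : Fin m, J (Fin m) ℂ ((goodPerm π s) (Sum.inl i))
        ((goodPerm π s) (Sum.inr i)) = ∏ i : Fin m, (if π i ∈ s then (1:ℂ) else -1) := by
      refine Finset.prod_congr rfl fun i _ => ?_
      rw [goodPerm_inl, goodPerm_inr]
      by_cases hmem : π i ∈ s <;> simp [hmem, J_inl_inr, J_inr_inl]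
    rw [hsign, hprod, Equiv.prod_comp π (fun k => if k ∈ s then (1:ℂ) else -1)]
    have hpow : ((-1 : ℂ)) ^ s.card = ∏ k : Fin m, (if k ∈ s then (-1:ℂ) else 1) := by
      rw [Finset.prod_ite_mem Finset.univ s (fun _ => (-1 : ℂ)), Finset.univ_inter,
        Finset.prod_const]
    rw [hpow, ← Finset.prod_mul_distrib]
    have hval : ∀ k : Fin m, ((if k ∈ s then (-1:ℂ) else 1) * (if k ∈ s then (1:ℂ) else -1))
        = -1 := by
      intro k; by_cases hk : k ∈ s <;> simp [hk]
    rw [Finset.prod_congr rfl fun k _ => hval k, Finset.prod_const, Finset.card_univ,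
      Fintype.card_fin]
  rw [Finset.sum_congr rfl fun pe _ => hterm pe, Finset.sum_const, Finset.card_univ]
  rw [Fintype.card_prod, Fintype.card_perm, Fintype.card_finset, Fintype.card_fin]
  push_cast
  ring

lemma pairForm_single (a b : Idx m) :
    (Pi.single a (1:ℂ)) ⬝ᵥ (J (Fin m) ℂ *ᵥ Pi.single b (1:ℂ)) = J (Fin m) ℂ a b := by
  rw [mulVec_single, single_dotProduct]
  simp

lemma conj_entry (B : Matrix (Idx m) (Idx m) ℂ) (a b : Idx m) :
    (B * J (Fin m) ℂ * Bᵀ) a b = (B a) ⬝ᵥ (J (Fin m) ℂ *ᵥ (B b)) := by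
  simp only [Matrix.mul_apply, Matrix.transpose_apply, dotProduct, Matrix.mulVec,
    Finset.sum_mul, Finset.mul_sum]
  rw [Finset.sum_comm]
  exact Finset.sum_congr rfl fun k _ => Finset.sum_congr rfl fun c _ => by ring

lemma factorial_ne_zero' : ((2:ℂ) ^ m * m.factorial) ≠ 0 := by
  apply mul_ne_zero (pow_ne_zero _ two_ne_zero)
  exact_mod_cast Nat.cast_ne_zero.mpr (Nat.factorial_ne_zero m)

lemma alternatization_eval (v : Idx m → (Idx m → ℂ)) :
    MultilinearMap.alternatization (mBase m) v =
      ∑ σ : Equiv.Perm (Idx m), ((Equiv.Perm.sign σ : ℤ) : ℂ) *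
        ∏ i : Fin m, (v (σ (Sum.inl i))) ⬝ᵥ (J (Fin m) ℂ *ᵥ v (σ (Sum.inr i))) := by
  rw [MultilinearMap.alternatization_apply]
  refine Finset.sum_congr rfl fun σ _ => ?_
  rw [MultilinearMap.domDomCongr_apply, mBase_apply]
  rw [Units.smul_def, zsmul_eq_mul]

lemma eval_Pf_conj (B : Matrix (Idx m) (Idx m) ℂ) :
    eval (fun p => (B * J (Fin m) ℂ * Bᵀ) p.1 p.2) (Pf m) = B.det := by
  classical
  have hsum : (∑ σ : Equiv.Perm (Idx m), ((Equiv.Perm.sign σ : ℤ) : ℂ) *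
      ∏ i : Fin m, (B * J (Fin m) ℂ * Bᵀ) (σ (Sum.inl i)) (σ (Sum.inr i))) =
      MultilinearMap.alternatization (mBase m) (fun a => B a) := by
    rw [alternatization_eval]
    exact Finset.sum_congr rfl fun σ _ => by
      rw [Finset.prod_congr rfl fun i _ => conj_entry B (σ (Sum.inl i)) (σ (Sum.inr i))]
  have hdet := AlternatingMap.eq_smul_basis_det (e := Pi.basisFun ℂ (Idx m))
    (MultilinearMap.alternatization (mBase m))
  have happ := congrArg (fun f : AlternatingMap ℂ (Idx m → ℂ) ℂ (Idx m) =>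
    f (fun a => B a)) hdet
  simp only [AlternatingMap.smul_apply, smul_eq_mul] at happ
  have hbasis : (MultilinearMap.alternatization (mBase m)) (⇑(Pi.basisFun ℂ (Idx m))) =
      (-1) ^ m * (2 ^ m * m.factorial) := by
    have : ⇑(Pi.basisFun ℂ (Idx m)) = fun a : Idx m => (Pi.single a 1 : Idx m → ℂ) := by
      funext a
      exact Pi.basisFun_apply ℂ (Idx m) a
    rw [this, alternatization_eval]
    rw [Finset.sum_congr rfl fun σ _ => by
      rw [Finset.prod_congr rfl fun i _ => pairForm_single (σ (Sum.inl i)) (σ (Sum.inr i))]]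
    exact core_sum
  have hbdet : (Pi.basisFun ℂ (Idx m)).det (fun a => B a) = B.det := by
    rw [Module.Basis.det_apply]
    have : (Pi.basisFun ℂ (Idx m)).toMatrix (fun a => B a) = Bᵀ := by
      ext i j
      rw [Module.Basis.toMatrix_apply, Pi.basisFun_repr, Matrix.transpose_apply]
    rw [this, Matrix.det_transpose]
  rw [eval_Pf, hsum, happ, hbasis, hbdet]
  have h1 : ((-1:ℂ)) ^ m * ((-1:ℂ)) ^ m = 1 := by
    rw [← pow_add]
    exact Even.neg_one_pow ⟨m, (two_mul m).symm ▸ by ring⟩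
  have h2 : ((-1:ℂ)) ^ (m*2) = 1 := by rw [pow_mul, pow_two, h1]
  field_simp [factorial_ne_zero']
  ring_nf
  rw [h2]
  rw [mul_one, mul_comm, ← mul_assoc, inv_mul_cancel₀ (Nat.cast_ne_zero.mpr (Nat.factorial_ne_zero m) : (m.factorial : ℂ) ≠ 0), one_mul]

lemma eval_Pf_smul (s : ℂ) (N : Matrix (Idx m) (Idx m) ℂ) :
    eval (fun p => (s • N) p.1 p.2) (Pf m) = s ^ m * eval (fun p => N p.1 p.2) (Pf m) := by
  rw [eval_Pf, eval_Pf]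
  have h : ∀ σ : Equiv.Perm (Idx m),
      (∏ i : Fin m, (s • N) (σ (Sum.inl i)) (σ (Sum.inr i))) =
        s ^ m * ∏ i : Fin m, N (σ (Sum.inl i)) (σ (Sum.inr i)) := by
    intro σ
    simp only [Matrix.smul_apply, smul_eq_mul]
    rw [Finset.prod_mul_distrib, Finset.prod_const, Finset.card_univ, Fintype.card_fin]
  rw [Finset.sum_congr rfl fun σ _ => by rw [h σ]]
  simp only [Finset.mul_sum]
  exact Finset.sum_congr rfl fun σ _ => by ring

lemma exists_elem_decomp : ∀ (S : Finset (Idx m)) (A : Matrix (Idx m) (Idx m) ℂ),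
    Aᵀ = -A → (∀ x y, A x y ≠ 0 → x ∈ S ∧ y ∈ S) →
    ∃ (k : ℕ) (u v : Fin k → (Idx m → ℂ)), 2 * k ≤ S.card ∧
      A = ∑ j : Fin k, Matrix.of (fun x y => u j x * v j y - v j x * u j y) := by
  intro S
  induction S using Finset.strongInduction with
  | _ S ih =>
    intro A hA hsupp
    by_cases h0 : A = 0
    · exact ⟨0, (fun j => 0), (fun j => 0), by simp, by simp [h0]⟩
    have hAp : ∀ x y, A y x = -A x y := by
      intro x y
      have := congrFun (congrFun hA x) y
      simpa [Matrix.transpose_apply] using this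
    have hdiag : ∀ x, A x x = 0 := by
      intro x
      have := hAp x x
      have h2 : A x x + A x x = 0 := by linear_combination this
      exact add_self_eq_zero.mp h2
    have hex : ∃ p q, A p q ≠ 0 := by
      by_contra hc
      push_neg at hc
      exact h0 (Matrix.ext fun p q => hc p q)
    obtain ⟨p, q, hpq⟩ := hex
    have hpq_ne : p ≠ q := fun h => hpq (h ▸ hdiag p)
    have hpS : p ∈ S := (hsupp p q hpq).1
    have hqS : q ∈ S := (hsupp p q hpq).2
    set a : ℂ := A p q with ha
    set u : Idx m → ℂ := fun x => a⁻¹ * A x p with hu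
    set v : Idx m → ℂ := fun x => A x q with hv
    set A' : Matrix (Idx m) (Idx m) ℂ :=
      A - Matrix.of (fun x y => u x * v y - v x * u y) with hA'def
    have hup : u p = 0 := by rw [hu]; simp [hdiag p]
    have huq : u q = -1 := by
      rw [hu]
      simp only
      rw [hAp p q, ← ha]
      field_simp
    have hvp : v p = a := by rw [hv]
    have hvq : v q = 0 := by rw [hv]; simp [hdiag q]
    have hrowp : ∀ y, A' p y = 0 := by
      intro y
      rw [hA'def]
      simp only [Matrix.sub_apply, Matrix.of_apply, hup, hvp]
      have h1 : A y p = -A p y := hAp p y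
      rw [hu]
      simp only
      rw [h1]
      field_simp
      ring
    have hrowq : ∀ y, A' q y = 0 := by
      intro y
      rw [hA'def]
      simp only [Matrix.sub_apply, Matrix.of_apply, huq, hvq]
      have h1 : A y q = -A q y := hAp q y
      rw [hv]
      simp only
      rw [h1]
      ring
    have hA'alt : A'ᵀ = -A' := by
      ext x y
      rw [hA'def]
      simp only [Matrix.transpose_apply, Matrix.sub_apply, Matrix.of_apply, Matrix.neg_apply]
      rw [hAp y x]
      ring
    have hA'p : ∀ x y, A' y x = -A' x y := by
      intro x y
      have := congrFun (congrFun hA'alt x) y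
      simpa [Matrix.transpose_apply] using this
    have hxside : ∀ x y, A' x y ≠ 0 → x ∈ (S.erase p).erase q := by
      intro x y hxy
      have hxp : x ≠ p := fun h => hxy (h ▸ hrowp y)
      have hxq : x ≠ q := fun h => hxy (h ▸ hrowq y)
      have hxS : x ∈ S := by
        by_contra hxS
        apply hxy
        have h1 : A x y = 0 := by
          by_contra h1
          exact hxS (hsupp x y h1).1
        have h2 : A x p = 0 := by
          by_contra h2
          exact hxS (hsupp x p h2).1
        have h3 : A x q = 0 := by
          by_contra h3
          exact hxS (hsupp x q h3).1
        rw [hA'def]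
        simp [hu, hv, h1, h2, h3]
      exact Finset.mem_erase.mpr ⟨hxq, Finset.mem_erase.mpr ⟨hxp, hxS⟩⟩
    have hsupp' : ∀ x y, A' x y ≠ 0 → x ∈ (S.erase p).erase q ∧ y ∈ (S.erase p).erase q := by
      intro x y hxy
      refine ⟨hxside x y hxy, hxside y x ?_⟩
      rw [hA'p x y]
      simpa using hxy
    have hss : (S.erase p).erase q ⊂ S :=
      lt_of_le_of_lt (Finset.erase_subset q (S.erase p)) (Finset.erase_ssubset hpS)
    obtain ⟨k, u', v', hk, hsum⟩ := ih _ hss A' hA'alt hsupp'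
    have hqe : q ∈ S.erase p := Finset.mem_erase.mpr ⟨hpq_ne.symm, hqS⟩
    have hcard : ((S.erase p).erase q).card = S.card - 2 := by
      rw [Finset.card_erase_of_mem hqe, Finset.card_erase_of_mem hpS]
      omega
    have h2card : 2 ≤ S.card := by
      have := Finset.one_lt_card.mpr ⟨p, hpS, q, hqS, hpq_ne⟩
      omega
    refine ⟨k + 1, Fin.cons u u', Fin.cons v v', by omega, ?_⟩
    have hsplit : A = Matrix.of (fun x y => u x * v y - v x * u y) + A' := by
      rw [hA'def]; abel
    rw [hsplit, hsum, Fin.sum_univ_succ]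
    simp [Fin.cons_zero, Fin.cons_succ]

lemma conj_entry_sum (M : Matrix (Idx m) (Idx m) ℂ) (x y : Idx m) :
    (M * J (Fin m) ℂ * Mᵀ) x y =
      ∑ j : Fin m, (M x (Sum.inr j) * M y (Sum.inl j) -
        M x (Sum.inl j) * M y (Sum.inr j)) := by
  rw [conj_entry]
  simp only [dotProduct, Matrix.mulVec, Fintype.sum_sum_type, J_inl_inl, J_inl_inr,
    J_inr_inl, J_inr_inr, dotProduct]
  simp only [ite_mul, one_mul, neg_one_mul, zero_mul, Finset.sum_ite_eq,
    Finset.mem_univ, if_true, Finset.sum_const_zero, add_zero, zero_add]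
  rw [← Finset.sum_add_distrib]
  refine Finset.sum_congr rfl fun j _ => by ring

lemma sum_dite_castLE {k : ℕ} (hkm : k ≤ m) (G : Fin k → ℂ) :
    ∑ j : Fin m, (if h : (j : ℕ) < k then G ⟨j, h⟩ else 0) = ∑ j : Fin k, G j := by
  have h1 : ∑ j : Fin k, G j = ∑ j : Fin k, (if h : (j : ℕ) < k then G ⟨j, h⟩ else 0) := by
    refine Finset.sum_congr rfl fun j _ => ?_
    rw [dif_pos j.isLt]
  rw [h1, Fin.sum_univ_eq_sum_range (fun i => if h : i < k then G ⟨i, h⟩ else 0) m,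
    Fin.sum_univ_eq_sum_range (fun i => if h : i < k then G ⟨i, h⟩ else 0) k]
  refine (Finset.sum_subset (Finset.range_subset_range.mpr hkm) ?_).symm
  intro i _ hik
  rw [Finset.mem_range] at hik
  rw [dif_neg hik]

lemma exists_conj (A : Matrix (Idx m) (Idx m) ℂ) (hA : Aᵀ = -A) :
    ∃ M : Matrix (Idx m) (Idx m) ℂ, A = M * J (Fin m) ℂ * Mᵀ := by
  obtain ⟨k, u, v, hk, hsum⟩ := exists_elem_decomp Finset.univ A hA
    (fun x y _ => ⟨Finset.mem_univ x, Finset.mem_univ y⟩)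
  have hkm : k ≤ m := by
    have : (Finset.univ : Finset (Idx m)).card = m + m := by
      rw [Finset.card_univ, Fintype.card_sum, Fintype.card_fin]
    omega
  refine ⟨Matrix.of fun x c => Sum.elim
    (fun j : Fin m => if h : (j : ℕ) < k then v ⟨j, h⟩ x else 0)
    (fun j : Fin m => if h : (j : ℕ) < k then u ⟨j, h⟩ x else 0) c, ?_⟩
  ext x y
  rw [conj_entry_sum, hsum]
  simp only [Matrix.sum_apply, Matrix.of_apply, Sum.elim_inl, Sum.elim_inr]
  rw [← sum_dite_castLE hkm (fun j => u j x * v j y - v j x * u j y)]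
  refine Finset.sum_congr rfl fun j _ => ?_
  by_cases hj : (j : ℕ) < k
  · rw [dif_pos hj, dif_pos hj, dif_pos hj, dif_pos hj, dif_pos hj]
  · simp only [dif_neg hj]
    ring

lemma eval_Pf_J : eval (fun p => J (Fin m) ℂ p.1 p.2) (Pf m) = 1 := by
  have h1 := eval_Pf_conj (1 : Matrix (Idx m) (Idx m) ℂ)
  have : (fun p : Idx m × Idx m => ((1 : Matrix (Idx m) (Idx m) ℂ) * J (Fin m) ℂ * (1 : Matrix (Idx m) (Idx m) ℂ)ᵀ) p.1 p.2) = fun p => J (Fin m) ℂ p.1 p.2 := by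
    funext p
    rw [Matrix.transpose_one, Matrix.mul_one, Matrix.one_mul]
  rw [this, Matrix.det_one] at h1
  exact h1

lemma det_J' : (J (Fin m) ℂ).det = 1 := by
  have h := eval_Pf_conj (J (Fin m) ℂ)
  have hJJ : J (Fin m) ℂ * J (Fin m) ℂ * (J (Fin m) ℂ)ᵀ = J (Fin m) ℂ := by
    rw [J_transpose, Matrix.mul_neg, J_squared]
    simp
  have heq : (fun p : Idx m × Idx m => (J (Fin m) ℂ * J (Fin m) ℂ * (J (Fin m) ℂ)ᵀ) p.1 p.2)
      = fun p => J (Fin m) ℂ p.1 p.2 := by rw [hJJ]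
  rw [heq, eval_Pf_J] at h
  exact h.symm

lemma sq_eval_Pf (A : Matrix (Idx m) (Idx m) ℂ) (hA : Aᵀ = -A) :
    (eval (fun p => A p.1 p.2) (Pf m)) ^ 2 = A.det := by
  obtain ⟨M, rfl⟩ := exists_conj A hA
  rw [eval_Pf_conj, Matrix.det_mul, Matrix.det_mul, det_J', Matrix.det_transpose]
  ring

lemma sympl_det_one {u : Matrix (Idx m) (Idx m) ℂ} (hu : u ∈ symplecticGroup (Fin m) ℂ) :
    u.det = 1 := by
  have h := eval_Pf_conj u
  rw [SymplecticGroup.mem_iff] at hu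
  have heq : (fun p : Idx m × Idx m => (u * J (Fin m) ℂ * uᵀ) p.1 p.2)
      = fun p => J (Fin m) ℂ p.1 p.2 := by rw [hu]
  rw [heq, eval_Pf_J] at h
  exact h.symm

lemma eval_Pf_invariant (s : ℂ) (g A : Matrix (Idx m) (Idx m) ℂ) (hg : g.det = 1)
    (hA : Aᵀ = -A) :
    eval (fun p => (s • (g * A * gᵀ)) p.1 p.2) (Pf m) =
      s ^ m * eval (fun p => A p.1 p.2) (Pf m) := by
  obtain ⟨M, rfl⟩ := exists_conj A hA
  rw [eval_Pf_smul, eval_Pf_conj]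
  have hconj : g * (M * J (Fin m) ℂ * Mᵀ) * gᵀ = (g * M) * J (Fin m) ℂ * (g * M)ᵀ := by
    rw [Matrix.transpose_mul]
    noncomm_ring
  rw [show (fun p : Idx m × Idx m => (g * (M * J (Fin m) ℂ * Mᵀ) * gᵀ) p.1 p.2)
      = fun p => ((g * M) * J (Fin m) ℂ * (g * M)ᵀ) p.1 p.2 from by rw [hconj],
    eval_Pf_conj, Matrix.det_mul, hg, one_mul]

lemma J_skew_entry (i j : Idx m) : J (Fin m) ℂ j i = - J (Fin m) ℂ i j := by
  have := congrFun (congrFun (J_transpose (Fin m) ℂ) i) j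
  simpa [Matrix.transpose_apply] using this

lemma skew_dot_self (w : Idx m → ℂ) : w ⬝ᵥ (J (Fin m) ℂ *ᵥ w) = 0 := by
  have hexp : w ⬝ᵥ (J (Fin m) ℂ *ᵥ w) =
      ∑ i : Idx m, ∑ j : Idx m, w i * (J (Fin m) ℂ i j * w j) := by
    simp only [dotProduct, Matrix.mulVec, Finset.mul_sum]
  have hneg : (∑ i : Idx m, ∑ j : Idx m, w i * (J (Fin m) ℂ i j * w j)) =
      -∑ i : Idx m, ∑ j : Idx m, w i * (J (Fin m) ℂ i j * w j) := by
    nth_rewrite 1 [Finset.sum_comm]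
    rw [← Finset.sum_neg_distrib]
    refine Finset.sum_congr rfl fun i _ => ?_
    rw [← Finset.sum_neg_distrib]
    refine Finset.sum_congr rfl fun j _ => ?_
    rw [J_skew_entry]
    ring
  have h0 : (∑ i : Idx m, ∑ j : Idx m, w i * (J (Fin m) ℂ i j * w j)) = 0 := by
    have h2 : (∑ i : Idx m, ∑ j : Idx m, w i * (J (Fin m) ℂ i j * w j)) +
        (∑ i : Idx m, ∑ j : Idx m, w i * (J (Fin m) ℂ i j * w j)) = 0 := by
      linear_combination hneg
    exact add_self_eq_zero.mp h2
  rw [hexp, h0]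

lemma J_mulVec_ne_zero {a : Idx m → ℂ} (ha : a ≠ 0) : J (Fin m) ℂ *ᵥ a ≠ 0 := by
  intro h
  apply ha
  have h2 : J (Fin m) ℂ *ᵥ (J (Fin m) ℂ *ᵥ a) = 0 := by rw [h, Matrix.mulVec_zero]
  rw [Matrix.mulVec_mulVec, J_squared, Matrix.neg_mulVec, Matrix.one_mulVec] at h2
  simpa [neg_eq_zero] using h2

lemma vecMulVec_mul (w u : Idx m → ℂ) (N : Matrix (Idx m) (Idx m) ℂ) :
    vecMulVec w u * N = vecMulVec w (u ᵥ* N) := by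
  ext x y
  simp only [Matrix.mul_apply, vecMulVec_apply, Matrix.vecMul, dotProduct, Finset.mul_sum]
  exact Finset.sum_congr rfl fun k _ => mul_assoc _ _ _

lemma mul_vecMulVec (N : Matrix (Idx m) (Idx m) ℂ) (u w : Idx m → ℂ) :
    N * vecMulVec u w = vecMulVec (N *ᵥ u) w := by
  ext x y
  simp only [Matrix.mul_apply, vecMulVec_apply, Matrix.mulVec, dotProduct, Finset.sum_mul]
  exact Finset.sum_congr rfl fun k _ => by ring

lemma vecMulVec_transpose' (w u : Idx m → ℂ) :
    (vecMulVec w u)ᵀ = vecMulVec u w := by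
  ext x y
  simp [vecMulVec_apply, mul_comm]

lemma vecMulVec_mulVec (w u a : Idx m → ℂ) :
    vecMulVec w u *ᵥ a = (u ⬝ᵥ a) • w := by
  ext x
  simp only [vecMulVec_apply, Matrix.mulVec, dotProduct, Pi.smul_apply, smul_eq_mul,
    Finset.sum_mul]
  exact Finset.sum_congr rfl fun k _ => by ring

/-- Symplectic transvection. -/
noncomputable def transv (c : ℂ) (w : Idx m → ℂ) : Matrix (Idx m) (Idx m) ℂ :=
  1 + c • vecMulVec w (J (Fin m) ℂ *ᵥ w)

lemma vecMul_J (u : Idx m → ℂ) : u ᵥ* J (Fin m) ℂ = -(J (Fin m) ℂ *ᵥ u) := by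
  have : u ᵥ* J (Fin m) ℂ = u ᵥ* ((J (Fin m) ℂ)ᵀ)ᵀ := by rw [Matrix.transpose_transpose]
  rw [this, Matrix.vecMul_transpose, J_transpose, Matrix.neg_mulVec]

lemma transv_symplectic (c : ℂ) (w : Idx m → ℂ) :
    transv c w * J (Fin m) ℂ * (transv c w)ᵀ = J (Fin m) ℂ := by
  set u : Idx m → ℂ := J (Fin m) ℂ *ᵥ w with hu
  have huJ : u ᵥ* J (Fin m) ℂ = w := by
    rw [vecMul_J, hu, Matrix.mulVec_mulVec, J_squared, Matrix.neg_mulVec,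
      Matrix.one_mulVec, neg_neg]
  have hJu : J (Fin m) ℂ *ᵥ u = -w := by
    rw [hu, Matrix.mulVec_mulVec, J_squared, Matrix.neg_mulVec, Matrix.one_mulVec]
  have hwu : u ⬝ᵥ w = 0 := by
    rw [dotProduct_comm, hu]
    exact skew_dot_self w
  have hEJ : vecMulVec w u * J (Fin m) ℂ = vecMulVec w w := by
    rw [vecMulVec_mul, huJ]
  have hJEt : J (Fin m) ℂ * vecMulVec u w = -vecMulVec w w := by
    rw [mul_vecMulVec, hJu]
    ext x y; simp [vecMulVec_apply]
  have hEJEt : vecMulVec w w * vecMulVec u w = 0 := by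
    rw [mul_vecMulVec, vecMulVec_mulVec, dotProduct_comm w u, hwu, zero_smul]
    ext x y; simp [vecMulVec_apply]
  rw [transv, Matrix.transpose_add, Matrix.transpose_one, Matrix.transpose_smul,
    vecMulVec_transpose']
  simp only [Matrix.add_mul, Matrix.mul_add, Matrix.smul_mul, Matrix.mul_smul,
    Matrix.one_mul, Matrix.mul_one]
  rw [hEJ, hJEt, hEJEt]
  simp [smul_neg]

lemma transv_mulVec (c : ℂ) (w a : Idx m → ℂ) :
    transv c w *ᵥ a = a + (c * (a ⬝ᵥ (J (Fin m) ℂ *ᵥ w))) • w := by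
  rw [transv, Matrix.add_mulVec, Matrix.one_mulVec, Matrix.smul_mulVec,
    vecMulVec_mulVec, dotProduct_comm, smul_smul]

lemma step_lemma (a b : Idx m → ℂ) (hab : a ⬝ᵥ (J (Fin m) ℂ *ᵥ b) ≠ 0) :
    ∃ h : Matrix (Idx m) (Idx m) ℂ,
      h * J (Fin m) ℂ * hᵀ = J (Fin m) ℂ ∧ h *ᵥ a = b := by
  refine ⟨transv (a ⬝ᵥ (J (Fin m) ℂ *ᵥ b))⁻¹ (b - a), transv_symplectic _ _, ?_⟩
  rw [transv_mulVec]
  have h1 : a ⬝ᵥ (J (Fin m) ℂ *ᵥ (b - a)) = a ⬝ᵥ (J (Fin m) ℂ *ᵥ b) := by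
    rw [Matrix.mulVec_sub, dotProduct_sub, skew_dot_self, sub_zero]
  rw [h1, inv_mul_cancel₀ hab, one_smul]
  abel

lemma reach (a w : Idx m → ℂ) (ha : a ≠ 0) (hw : w ≠ 0) :
    ∃ h : Matrix (Idx m) (Idx m) ℂ,
      h * J (Fin m) ℂ * hᵀ = J (Fin m) ℂ ∧ h *ᵥ a = w := by
  by_cases hω : a ⬝ᵥ (J (Fin m) ℂ *ᵥ w) ≠ 0
  · exact step_lemma a w hω
  push_neg at hω
  -- need intermediate z
  set α : Idx m → ℂ := -(J (Fin m) ℂ *ᵥ a) with hα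
  have hαe : ∀ z, a ⬝ᵥ (J (Fin m) ℂ *ᵥ z) = α ⬝ᵥ z := by
    intro z
    rw [dotProduct_mulVec, vecMul_J]
  have hαne : α ≠ 0 := by
    rw [hα]
    simpa [neg_eq_zero] using J_mulVec_ne_zero ha
  set β : Idx m → ℂ := J (Fin m) ℂ *ᵥ w with hβ
  have hβe : ∀ z, z ⬝ᵥ (J (Fin m) ℂ *ᵥ w) = β ⬝ᵥ z := by
    intro z
    rw [dotProduct_comm]
  have hβne : β ≠ 0 := J_mulVec_ne_zero hw
  obtain ⟨i, hi⟩ := Function.ne_iff.mp hαne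
  obtain ⟨j, hj⟩ := Function.ne_iff.mp hβne
  simp only [Pi.zero_apply] at hi hj
  have hz : ∃ z : Idx m → ℂ, α ⬝ᵥ z ≠ 0 ∧ β ⬝ᵥ z ≠ 0 := by
    by_cases hβi : β i ≠ 0
    · refine ⟨Pi.single i 1, ?_, ?_⟩ <;> simp [dotProduct_single, hi, hβi]
    push_neg at hβi
    by_cases hαj : α j ≠ 0
    · refine ⟨Pi.single j 1, ?_, ?_⟩ <;> simp [dotProduct_single, hαj, hj]
    push_neg at hαj
    refine ⟨Pi.single i 1 + Pi.single j 1, ?_, ?_⟩ <;>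
      simp [dotProduct_add, dotProduct_single, hαj, hβi, hi, hj]
  obtain ⟨z, hz1, hz2⟩ := hz
  have hza : z ≠ 0 := by
    intro h0
    rw [h0, dotProduct_zero] at hz1
    exact hz1 rfl
  obtain ⟨h₁, hh₁, hh₁v⟩ := step_lemma a z (by rw [hαe]; exact hz1)
  obtain ⟨h₂, hh₂, hh₂v⟩ := step_lemma z w (by rw [hβe z]; exact hz2)
  refine ⟨h₂ * h₁, ?_, ?_⟩
  · have hre : h₂ * h₁ * J (Fin m) ℂ * (h₂ * h₁)ᵀ =
        h₂ * (h₁ * J (Fin m) ℂ * h₁ᵀ) * h₂ᵀ := by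
      rw [Matrix.transpose_mul]
      noncomm_ring
    rw [hre, hh₁, hh₂]
  · rw [← Matrix.mulVec_mulVec, hh₁v, hh₂v]
/-- The reindexing equivalence splitting off a 2-dimensional symplectic block. -/
def embE (n : ℕ) (h : n - 1 + 1 = n) : (Idx (n-1) ⊕ (Fin 1 ⊕ Fin 1)) ≃ Idx n :=
  ((Equiv.sumSumSumComm (Fin (n-1)) (Fin (n-1)) (Fin 1) (Fin 1)).trans
    (Equiv.sumCongr finSumFinEquiv finSumFinEquiv)).trans
    (Equiv.sumCongr (finCongr h) (finCongr h))

section EmbSec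
variable (n : ℕ) (h : n - 1 + 1 = n)

def embf : Fin (n-1) ⊕ Fin 1 → Fin n := fun z => finCongr h (finSumFinEquiv z)

lemma embf_inj : Function.Injective (embf n h) := by
  intro a b hab
  exact finSumFinEquiv.injective ((finCongr h).injective hab)

lemma embE_ll (i : Fin (n-1)) : embE n h (Sum.inl (Sum.inl i)) = Sum.inl (embf n h (Sum.inl i)) := rfl
lemma embE_lr (i : Fin (n-1)) : embE n h (Sum.inl (Sum.inr i)) = Sum.inr (embf n h (Sum.inl i)) := rfl
lemma embE_rl (i : Fin 1) : embE n h (Sum.inr (Sum.inl i)) = Sum.inl (embf n h (Sum.inr i)) := rfl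
lemma embE_rr (i : Fin 1) : embE n h (Sum.inr (Sum.inr i)) = Sum.inr (embf n h (Sum.inr i)) := rfl

lemma embE_J :
    reindex (embE n h) (embE n h)
      (fromBlocks (J (Fin (n-1)) ℂ) 0 0 (J (Fin 1) ℂ)) = J (Fin n) ℂ := by
  have key : ∀ x y, fromBlocks (J (Fin (n-1)) ℂ) 0 0 (J (Fin 1) ℂ) x y
      = J (Fin n) ℂ (embE n h x) (embE n h y) := by
    rintro ((i | i) | (i | i)) ((j | j) | (j | j)) <;>
      simp only [embE_ll, embE_lr, embE_rl, embE_rr, Matrix.fromBlocks_apply₁₁,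
        Matrix.fromBlocks_apply₁₂, Matrix.fromBlocks_apply₂₁, Matrix.fromBlocks_apply₂₂,
        J_inl_inl, J_inl_inr, J_inr_inl, J_inr_inr, Matrix.zero_apply,
        (embf_inj n h).eq_iff] <;>
      simp [J_inl_inl, J_inl_inr, J_inr_inl, J_inr_inr]
  ext a b
  rw [Matrix.reindex_apply, Matrix.submatrix_apply, key,
    Equiv.apply_symm_apply, Equiv.apply_symm_apply]

variable {u v : Matrix (Idx (n-1)) (Idx (n-1)) ℂ}

def embMat (u : Matrix (Idx (n-1)) (Idx (n-1)) ℂ) : Matrix (Idx n) (Idx n) ℂ :=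
  reindex (embE n h) (embE n h) (fromBlocks u 0 0 1)

lemma embMat_mul :
    embMat n h (u * v) = embMat n h u * embMat n h v := by
  rw [embMat, embMat, embMat, Matrix.reindex_apply, Matrix.reindex_apply,
    Matrix.reindex_apply, Matrix.submatrix_mul_equiv, Matrix.fromBlocks_multiply]
  simp

lemma embMat_one : embMat n h (1 : Matrix (Idx (n-1)) (Idx (n-1)) ℂ) = 1 := by
  rw [embMat, Matrix.fromBlocks_one, Matrix.reindex_apply, Matrix.submatrix_one_equiv]

lemma embMat_det : (embMat n h u).det = u.det := by
  rw [embMat, Matrix.det_reindex_self, Matrix.det_fromBlocks_zero₂₁, Matrix.det_one, mul_one]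

lemma embMat_transpose : (embMat n h u)ᵀ = embMat n h uᵀ := by
  rw [embMat, embMat, Matrix.reindex_apply, Matrix.reindex_apply,
    Matrix.transpose_submatrix, Matrix.fromBlocks_transpose]
  simp

lemma embMat_J (hu : u * J (Fin (n-1)) ℂ * uᵀ = J (Fin (n-1)) ℂ) :
    embMat n h u * J (Fin n) ℂ * (embMat n h u)ᵀ = J (Fin n) ℂ := by
  rw [embMat_transpose, ← embE_J n h, embMat, embMat, Matrix.reindex_apply,
    Matrix.reindex_apply, Matrix.reindex_apply, Matrix.submatrix_mul_equiv,
    Matrix.submatrix_mul_equiv, Matrix.fromBlocks_multiply, Matrix.fromBlocks_multiply]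
  congr 1
  congr 1 <;> simp [hu]

def embIdx : Idx n := embE n h (Sum.inr (Sum.inr 0))

lemma embMat_single :
    embMat n h u *ᵥ Pi.single (embIdx n h) (1:ℂ) = Pi.single (embIdx n h) (1:ℂ) := by
  rw [Matrix.mulVec_single]
  funext a
  rw [Pi.smul_apply, Matrix.col_apply, MulOpposite.smul_eq_mul_unop, MulOpposite.unop_op]
  rw [embMat, Matrix.reindex_apply, Matrix.submatrix_apply]
  have hc : (embE n h).symm (embIdx n h) = Sum.inr (Sum.inr 0) := by
    rw [embIdx, Equiv.symm_apply_apply]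
  rw [hc, mul_one]
  rcases he : (embE n h).symm a with z | z
  · have : a = embE n h (Sum.inl z) := by rw [← he, Equiv.apply_symm_apply]
    rw [this]
    rw [Matrix.fromBlocks_apply₁₂]
    have hne : embE n h (Sum.inl z) ≠ embIdx n h := by
      rw [embIdx]
      intro hcon
      exact (by simp : (Sum.inl z : Idx (n-1) ⊕ (Fin 1 ⊕ Fin 1)) ≠ Sum.inr (Sum.inr 0))
        ((embE n h).injective hcon)
    rw [Pi.single_apply, if_neg hne]
    rfl
  · have : a = embE n h (Sum.inr z) := by rw [← he, Equiv.apply_symm_apply]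
    rw [this]
    rw [Matrix.fromBlocks_apply₂₂]
    rw [Pi.single_apply]
    have hiff : embE n h (Sum.inr z) = embIdx n h ↔ z = Sum.inr 0 := by
      rw [embIdx]
      constructor
      · intro hcon
        have := (embE n h).injective hcon
        simpa using this
      · intro hz; rw [hz]
    rw [Matrix.one_apply]
    by_cases hz : z = Sum.inr 0
    · rw [if_pos hz, if_pos (hiff.mpr hz)]
    · rw [if_neg hz, if_neg (fun hcon => hz (hiff.mp hcon))]

end EmbSec

lemma conj_entry_sum2 (M : Matrix (Idx m) (Idx m) ℂ) (a b : Idx m) :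
    (M * J (Fin m) ℂ * Mᵀ) a b =
      ∑ k : Idx m, ∑ l : Idx m, J (Fin m) ℂ k l * (M a k * M b l) := by
  rw [conj_entry]
  simp only [dotProduct, Matrix.mulVec, Finset.mul_sum]
  exact Finset.sum_congr rfl fun k _ => Finset.sum_congr rfl fun l _ => by ring

lemma eval_aeval' {σ τ : Type*} (f : σ → MvPolynomial τ ℂ) (g : τ → ℂ)
    (Q : MvPolynomial σ ℂ) :
    eval g (aeval f Q) = eval (fun s => eval g (f s)) Q := by
  have h1 := comp_aeval_apply (f := f) (MvPolynomial.aeval g : MvPolynomial τ ℂ →ₐ[ℂ] ℂ) Q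
  exact h1

lemma polyeval_aeval {σ : Type*} (f : σ → Polynomial ℂ) (ε : ℂ) (Q : MvPolynomial σ ℂ) :
    Polynomial.eval ε (MvPolynomial.aeval f Q) =
      eval (fun s => Polynomial.eval ε (f s)) Q := by
  have h1 := comp_aeval_apply (f := f) (Polynomial.aeval ε : Polynomial ℂ →ₐ[ℂ] ℂ) Q
  rw [show ⇑(Polynomial.aeval ε : Polynomial ℂ →ₐ[ℂ] ℂ) = Polynomial.eval ε from
    Polynomial.coe_aeval_eq_eval ε] at h1
  exact h1

lemma eval_charpoly' (B : Matrix (Idx m) (Idx m) ℂ) (ε : ℂ) :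
    Polynomial.eval ε (Matrix.charpoly B) = (ε • (1 : Matrix (Idx m) (Idx m) ℂ) - B).det := by
  rw [Matrix.charpoly, ← Polynomial.coe_evalRingHom, RingHom.map_det]
  congr 1
  ext i j
  by_cases hij : i = j
  · subst hij
    simp [Matrix.charmatrix_apply_eq, Matrix.smul_apply, Matrix.one_apply,
      Matrix.sub_apply]
  · simp [Matrix.charmatrix_apply_ne _ _ _ hij, Matrix.smul_apply,
      Matrix.one_apply_ne hij, Matrix.sub_apply]

lemma sum_elim_congr {α β γ : Type*} {f f' : α → γ} {g g' : β → γ}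
    (h1 : ∀ a, f a = f' a) (h2 : ∀ b, g b = g' b) :
    Sum.elim f g = Sum.elim f' g' := by
  funext s
  rcases s with a | b
  · exact h1 a
  · exact h2 b

/-- The symplectic subgroup homomorphism into the stabilizer. -/
noncomputable def sympHom (n : ℕ) (h : n - 1 + 1 = n) :
    ↥(Matrix.symplecticGroup (Fin (n-1)) ℂ) →*
      (ℂˣ × ℂˣ × Matrix.SpecialLinearGroup (Fin n ⊕ Fin n) ℂ) :=
  MonoidHom.mk' (fun u => (1, 1, ⟨embMat n h u.1, by
      rw [embMat_det]; exact sympl_det_one u.2⟩))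
    (fun u v => Prod.ext (one_mul (1:ℂˣ)).symm
      (Prod.ext (one_mul (1:ℂˣ)).symm (Subtype.ext (embMat_mul n h))))

end KsII4

/-- Ks II-4 (`n ≥ 2`): for the action of `GL₁² × SL 2n` on
`⋀² ℂ²ⁿ ⊕ ℂ²ⁿ` (alternating matrices with congruence action plus the vector
action), `(s, t, g) · (A, x) = (s • g A gᵀ, t • g x)`, the Pfaffian
`f(A, x) = Pf A` is a relative invariant (with character `sⁿ`, since
`det g = 1`), the stabilizer of a generic point contains a subgroup isomorphic
to `Sp (2n-2) ℂ`, and the set `{(A, x) | Pf A ≠ 0, x ≠ 0}` contains a dense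
orbit. -/
theorem ks_II_4_prehomogeneous (n : ℕ) (hn : 2 ≤ n) :
    ∃ P : MvPolynomial ((Fin n ⊕ Fin n) × (Fin n ⊕ Fin n)) ℂ,
      (∀ A : Matrix (Fin n ⊕ Fin n) (Fin n ⊕ Fin n) ℂ, Aᵀ = -A →
        (eval (fun p => A p.1 p.2) P) ^ 2 = A.det) ∧
      eval (fun p => Matrix.J (Fin n) ℂ p.1 p.2) P = 1 ∧
      (∀ (s : ℂˣ) (g : SpecialLinearGroup (Fin n ⊕ Fin n) ℂ)
          (A : Matrix (Fin n ⊕ Fin n) (Fin n ⊕ Fin n) ℂ), Aᵀ = -A →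
        eval (fun p => ((s : ℂ) • (g.1 * A * g.1ᵀ)) p.1 p.2) P
          = (s : ℂ) ^ n * eval (fun p => A p.1 p.2) P) ∧
      (∃ (v : Matrix (Fin n ⊕ Fin n) (Fin n ⊕ Fin n) ℂ × (Fin n ⊕ Fin n → ℂ))
          (φ : ↥(Matrix.symplecticGroup (Fin (n - 1)) ℂ) →*
            (ℂˣ × ℂˣ × SpecialLinearGroup (Fin n ⊕ Fin n) ℂ)),
        v.1ᵀ = -v.1 ∧ eval (fun p => v.1 p.1 p.2) P ≠ 0 ∧ v.2 ≠ 0 ∧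
        Function.Injective φ ∧
        (∀ u : ↥(Matrix.symplecticGroup (Fin (n - 1)) ℂ),
          ((φ u).1 : ℂ) • ((φ u).2.2.1 * v.1 * (φ u).2.2.1ᵀ) = v.1 ∧
          ((φ u).2.1 : ℂ) • ((φ u).2.2.1 *ᵥ v.2) = v.2)) ∧
      (∃ v : Matrix (Fin n ⊕ Fin n) (Fin n ⊕ Fin n) ℂ × (Fin n ⊕ Fin n → ℂ),
        v.1ᵀ = -v.1 ∧ eval (fun p => v.1 p.1 p.2) P ≠ 0 ∧ v.2 ≠ 0 ∧
        (∀ (s t : ℂˣ) (g : SpecialLinearGroup (Fin n ⊕ Fin n) ℂ),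
          eval (fun p => ((s : ℂ) • (g.1 * v.1 * g.1ᵀ)) p.1 p.2) P ≠ 0 ∧
          (t : ℂ) • (g.1 *ᵥ v.2) ≠ 0) ∧
        (∀ Q : MvPolynomial ((Fin n ⊕ Fin n) × (Fin n ⊕ Fin n) ⊕ (Fin n ⊕ Fin n)) ℂ,
          (∀ (s t : ℂˣ) (g : SpecialLinearGroup (Fin n ⊕ Fin n) ℂ),
            eval (Sum.elim (fun p => ((s : ℂ) • (g.1 * v.1 * g.1ᵀ)) p.1 p.2)
              (fun i => ((t : ℂ) • (g.1 *ᵥ v.2)) i)) Q = 0) →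
          ∀ (A : Matrix (Fin n ⊕ Fin n) (Fin n ⊕ Fin n) ℂ) (x : Fin n ⊕ Fin n → ℂ),
            Aᵀ = -A →
            eval (Sum.elim (fun p => A p.1 p.2) x) Q = 0)) := by
  classical
  have h1n : n - 1 + 1 = n := by omega
  refine ⟨KsII4.Pf n, fun A hA => KsII4.sq_eval_Pf A hA, KsII4.eval_Pf_J, ?_, ?_, ?_⟩
  · intro s g A hA
    exact KsII4.eval_Pf_invariant (s : ℂ) g.1 A g.2 hA
  · -- stabilizer part
    refine ⟨(J (Fin n) ℂ, Pi.single (KsII4.embIdx n h1n) (1:ℂ)), KsII4.sympHom n h1n,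
      J_transpose _ _, ?_, ?_, ?_, ?_⟩
    · rw [KsII4.eval_Pf_J]; exact one_ne_zero
    · intro hcon
      have := congrFun hcon (KsII4.embIdx n h1n)
      simp at this
    · intro u u' huu
      have h3 : KsII4.embMat n h1n u.1 = KsII4.embMat n h1n u'.1 :=
        congrArg (fun z : (ℂˣ × ℂˣ × SpecialLinearGroup (Fin n ⊕ Fin n) ℂ) =>
          z.2.2.1) huu
      have h4 : (fromBlocks u.1 0 0 1 :
          Matrix (KsII4.Idx (n-1) ⊕ (Fin 1 ⊕ Fin 1)) (KsII4.Idx (n-1) ⊕ (Fin 1 ⊕ Fin 1)) ℂ)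
          = fromBlocks u'.1 0 0 1 :=
        (Matrix.reindex (KsII4.embE n h1n) (KsII4.embE n h1n)).injective h3
      apply Subtype.ext
      ext x y
      have h5 := congrFun (congrFun h4 (Sum.inl x)) (Sum.inl y)
      simpa using h5
    · intro u
      constructor
      · show ((1 : ℂˣ) : ℂ) • (KsII4.embMat n h1n u.1 * J (Fin n) ℂ *
          (KsII4.embMat n h1n u.1)ᵀ) = J (Fin n) ℂ
        rw [Units.val_one, one_smul]
        exact KsII4.embMat_J n h1n (SymplecticGroup.mem_iff.mp u.2)
      · show ((1 : ℂˣ) : ℂ) • (KsII4.embMat n h1n u.1 *ᵥ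
          Pi.single (KsII4.embIdx n h1n) (1:ℂ)) = Pi.single (KsII4.embIdx n h1n) 1
        rw [Units.val_one, one_smul]
        exact KsII4.embMat_single n h1n
  · -- density part
    refine ⟨(J (Fin n) ℂ, Pi.single (KsII4.embIdx n h1n) (1:ℂ)), J_transpose _ _, ?_, ?_, ?_, ?_⟩
    · rw [KsII4.eval_Pf_J]; exact one_ne_zero
    · intro hcon
      have := congrFun hcon (KsII4.embIdx n h1n)
      simp at this
    · intro s t g
      constructor
      · rw [KsII4.eval_Pf_invariant (s : ℂ) g.1 (J (Fin n) ℂ) g.2 (J_transpose _ _),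
          KsII4.eval_Pf_J, mul_one]
        exact pow_ne_zero n (Units.ne_zero s)
      · intro hcon
        have hg0 : g.1 *ᵥ Pi.single (KsII4.embIdx n h1n) (1:ℂ) = 0 := by
          rcases smul_eq_zero.mp hcon with h | h
          · exact absurd h (Units.ne_zero t)
          · exact h
        have hunit : IsUnit g.1.det := by rw [g.2]; exact isUnit_one
        have hzero : (Pi.single (KsII4.embIdx n h1n) (1:ℂ) : (Fin n ⊕ Fin n) → ℂ) = 0 := by
          have h2 : g.1⁻¹ *ᵥ (g.1 *ᵥ Pi.single (KsII4.embIdx n h1n) (1:ℂ)) =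
              Pi.single (KsII4.embIdx n h1n) (1:ℂ) := by
            rw [Matrix.mulVec_mulVec, Matrix.nonsing_inv_mul _ hunit, Matrix.one_mulVec]
          rw [hg0, Matrix.mulVec_zero] at h2
          exact h2.symm
        have := congrFun hzero (KsII4.embIdx n h1n)
        simp at this
    · intro Q hQ A x hA
      set c₀ := KsII4.embIdx n h1n with hc₀
      -- step alpha: on invertible M and nonzero t
      have hα : ∀ (M : Matrix (Fin n ⊕ Fin n) (Fin n ⊕ Fin n) ℂ) (t : ℂ),
          M.det ≠ 0 → t ≠ 0 →
          eval (Sum.elim (fun p => (M * J (Fin n) ℂ * Mᵀ) p.1 p.2)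
            (fun i => t * (M *ᵥ Pi.single c₀ (1:ℂ)) i)) Q = 0 := by
        intro M t hM ht
        obtain ⟨c, hc⟩ := IsAlgClosed.exists_pow_nat_eq M.det (show 0 < n + n by omega)
        have hc0 : c ≠ 0 := by
          intro h0
          apply hM
          rw [← hc, h0, zero_pow (show n + n ≠ 0 by omega)]
        have hdetg : (c⁻¹ • M).det = 1 := by
          rw [Matrix.det_smul]
          have hcard : Fintype.card (Fin n ⊕ Fin n) = n + n := by
            simp [Fintype.card_sum]
          rw [hcard, inv_pow, hc, inv_mul_cancel₀ hM]
        have hmat : ((c^2 : ℂ)) • ((c⁻¹ • M) * J (Fin n) ℂ * (c⁻¹ • M)ᵀ)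
            = M * J (Fin n) ℂ * Mᵀ := by
          have h1 : (c⁻¹ • M) * J (Fin n) ℂ * (c⁻¹ • M)ᵀ =
              (c⁻¹ * c⁻¹) • (M * J (Fin n) ℂ * Mᵀ) := by
            rw [Matrix.transpose_smul, Matrix.smul_mul, Matrix.smul_mul, Matrix.mul_smul,
              smul_smul]
          rw [h1, smul_smul]
          have h2 : (c^2 : ℂ) * (c⁻¹ * c⁻¹) = 1 := by
            field_simp
          rw [h2, one_smul]
        have hvec : ((t * c : ℂ)) • ((c⁻¹ • M) *ᵥ Pi.single c₀ (1:ℂ))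
            = fun i => t * (M *ᵥ Pi.single c₀ (1:ℂ)) i := by
          rw [Matrix.smul_mulVec, smul_smul]
          have h3 : t * c * c⁻¹ = t := by field_simp
          rw [h3]
          rfl
        have hQ'' : eval (Sum.elim
            (fun p => (((c:ℂ)^2) • ((c⁻¹ • M) * J (Fin n) ℂ * (c⁻¹ • M)ᵀ)) p.1 p.2)
            (fun i => (((t*c : ℂ)) • ((c⁻¹ • M) *ᵥ Pi.single c₀ (1:ℂ))) i)) Q = 0 :=
          hQ (Units.mk0 (c^2) (pow_ne_zero 2 hc0))
            (Units.mk0 (t * c) (mul_ne_zero ht hc0)) ⟨c⁻¹ • M, hdetg⟩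
        rw [KsII4.sum_elim_congr (f' := fun p : (Fin n ⊕ Fin n) × (Fin n ⊕ Fin n) =>
            (M * J (Fin n) ℂ * Mᵀ) p.1 p.2)
            (g' := fun i => t * (M *ᵥ Pi.single c₀ (1:ℂ)) i)
            (fun p => by rw [hmat])
            (fun i => congrFun hvec i)] at hQ''
        exact hQ''
      -- step beta: all M, t
      have hβ : ∀ (M : Matrix (Fin n ⊕ Fin n) (Fin n ⊕ Fin n) ℂ) (t : ℂ),
          eval (Sum.elim (fun p => (M * J (Fin n) ℂ * Mᵀ) p.1 p.2)
            (fun i => t * (M *ᵥ Pi.single c₀ (1:ℂ)) i)) Q = 0 := by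
        set ent : ((Fin n ⊕ Fin n) × (Fin n ⊕ Fin n) ⊕ (Fin n ⊕ Fin n)) →
            MvPolynomial (((Fin n ⊕ Fin n) × (Fin n ⊕ Fin n)) ⊕ Unit) ℂ :=
          Sum.elim
            (fun p => ∑ k : Fin n ⊕ Fin n, ∑ l : Fin n ⊕ Fin n,
              C (J (Fin n) ℂ k l) * (X (Sum.inl (p.1, k)) * X (Sum.inl (p.2, l))))
            (fun i => X (Sum.inr ()) * X (Sum.inl (i, c₀))) with hent
        set Ψ := MvPolynomial.aeval ent Q with hΨdef
        have hρ : ∀ (M : Matrix (Fin n ⊕ Fin n) (Fin n ⊕ Fin n) ℂ) (t : ℂ),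
            eval (Sum.elim (fun q : (Fin n ⊕ Fin n) × (Fin n ⊕ Fin n) => M q.1 q.2)
              (fun _ : Unit => t)) Ψ =
            eval (Sum.elim (fun p => (M * J (Fin n) ℂ * Mᵀ) p.1 p.2)
              (fun i => t * (M *ᵥ Pi.single c₀ (1:ℂ)) i)) Q := by
          intro M t
          rw [hΨdef, KsII4.eval_aeval']
          have hfun : (fun s => eval (Sum.elim
              (fun q : (Fin n ⊕ Fin n) × (Fin n ⊕ Fin n) => M q.1 q.2)
              (fun _ : Unit => t)) (ent s)) =
              Sum.elim (fun p => (M * J (Fin n) ℂ * Mᵀ) p.1 p.2)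
                (fun i => t * (M *ᵥ Pi.single c₀ (1:ℂ)) i) := by
            funext sv
            rcases sv with p | i
            · rw [hent]
              simp only [Sum.elim_inl, map_sum, _root_.map_mul, eval_C, eval_X]
              rw [KsII4.conj_entry_sum2]
            · rw [hent]
              simp only [Sum.elim_inr, _root_.map_mul, eval_X]
              rw [Matrix.mulVec_single]
              simp [mul_comm]
          exact congrArg (fun F => eval F Q) hfun
        set D : MvPolynomial (((Fin n ⊕ Fin n) × (Fin n ⊕ Fin n)) ⊕ Unit) ℂ :=
          (Matrix.of fun i j : Fin n ⊕ Fin n => (X (Sum.inl (i,j)) :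
            MvPolynomial (((Fin n ⊕ Fin n) × (Fin n ⊕ Fin n)) ⊕ Unit) ℂ)).det *
            X (Sum.inr ()) with hDdef
        have hDeval : ∀ (M : Matrix (Fin n ⊕ Fin n) (Fin n ⊕ Fin n) ℂ) (t : ℂ),
            eval (Sum.elim (fun q : (Fin n ⊕ Fin n) × (Fin n ⊕ Fin n) => M q.1 q.2)
              (fun _ : Unit => t)) D = M.det * t := by
          intro M t
          rw [hDdef, _root_.map_mul]
          congr 1
          · rw [RingHom.map_det]
            congr 1
            ext i j
            simp
          · simp
        have hzero : Ψ * D = 0 := by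
          refine MvPolynomial.funext fun pt => ?_
          rw [_root_.map_mul, map_zero]
          have hpt : pt = Sum.elim
              (fun q : (Fin n ⊕ Fin n) × (Fin n ⊕ Fin n) =>
                (Matrix.of fun i j : Fin n ⊕ Fin n => pt (Sum.inl (i,j))) q.1 q.2)
              (fun _ : Unit => pt (Sum.inr ())) := by
            funext sv
            rcases sv with q | u
            · rfl
            · rfl
          by_cases hcase : (Matrix.of fun i j : Fin n ⊕ Fin n =>
              pt (Sum.inl (i,j))).det ≠ 0 ∧ pt (Sum.inr ()) ≠ 0
          · rw [hpt, hρ _ _, hα _ _ hcase.1 hcase.2, zero_mul]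
          · rw [hpt, hDeval]
            have hmt : (Matrix.of fun i j : Fin n ⊕ Fin n =>
                pt (Sum.inl (i,j))).det * pt (Sum.inr ()) = 0 := by
              rcases not_and_or.mp hcase with h | h
              · rw [not_not.mp h, zero_mul]
              · rw [not_not.mp h, mul_zero]
            rw [hmt, mul_zero]
        have hDne : D ≠ 0 := by
          intro h0
          have h1 := hDeval 1 1
          rw [h0, map_zero] at h1
          simp at h1
        have hΨ0 : Ψ = 0 := by
          rcases mul_eq_zero.mp hzero with h | h
          · exact h
          · exact absurd h hDne
        intro M t
        rw [← hρ M t, hΨ0, map_zero]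
      -- conclusion
      by_cases hx : x = 0
      · obtain ⟨M, hM⟩ := KsII4.exists_conj A hA
        have h0 := hβ M 0
        rw [show Sum.elim (fun p => (M * J (Fin n) ℂ * Mᵀ) p.1 p.2)
            (fun i => 0 * (M *ᵥ Pi.single c₀ (1:ℂ)) i) =
          Sum.elim (fun p : (Fin n ⊕ Fin n) × (Fin n ⊕ Fin n) => A p.1 p.2) x from
          KsII4.sum_elim_congr (fun p => by rw [← hM])
            (fun i => by rw [hx, zero_mul]; rfl)] at h0
        exact h0
      · have hQgood : ∀ ε : ℂ, (A + ε • J (Fin n) ℂ).det ≠ 0 →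
            eval (Sum.elim (fun p : (Fin n ⊕ Fin n) × (Fin n ⊕ Fin n) =>
              (A + ε • J (Fin n) ℂ) p.1 p.2) x) Q = 0 := by
          intro ε hdet
          have hAε : (A + ε • J (Fin n) ℂ)ᵀ = -(A + ε • J (Fin n) ℂ) := by
            rw [Matrix.transpose_add, Matrix.transpose_smul, hA, J_transpose, smul_neg]
            abel
          obtain ⟨M, hM⟩ := KsII4.exists_conj _ hAε
          have hdetM : M.det ≠ 0 := by
            intro h0
            apply hdet
            rw [hM, Matrix.det_mul, Matrix.det_mul, h0, zero_mul, zero_mul]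
          have hunit : IsUnit M.det := isUnit_iff_ne_zero.mpr hdetM
          have hwx : M *ᵥ (M⁻¹ *ᵥ x) = x := by
            rw [Matrix.mulVec_mulVec, Matrix.mul_nonsing_inv _ hunit, Matrix.one_mulVec]
          have hw : M⁻¹ *ᵥ x ≠ 0 := by
            intro h0
            apply hx
            rw [← hwx, h0, Matrix.mulVec_zero]
          have hsingle : (Pi.single c₀ (1:ℂ) : (Fin n ⊕ Fin n) → ℂ) ≠ 0 := by
            intro h0
            have := congrFun h0 c₀
            simp at this
          obtain ⟨hmat, hsymp, hvec⟩ :=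
            KsII4.reach (Pi.single c₀ (1:ℂ)) (M⁻¹ *ᵥ x) hsingle hw
          have h0 := hβ (M * hmat) 1
          have harg : Sum.elim (fun p : (Fin n ⊕ Fin n) × (Fin n ⊕ Fin n) =>
              ((M * hmat) * J (Fin n) ℂ * (M * hmat)ᵀ) p.1 p.2)
              (fun i => 1 * ((M * hmat) *ᵥ Pi.single c₀ (1:ℂ)) i) =
              Sum.elim (fun p : (Fin n ⊕ Fin n) × (Fin n ⊕ Fin n) =>
                (A + ε • J (Fin n) ℂ) p.1 p.2) x := by
            refine KsII4.sum_elim_congr ?_ ?_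
            · intro p
              have hcm : (M * hmat) * J (Fin n) ℂ * (M * hmat)ᵀ =
                  A + ε • J (Fin n) ℂ := by
                rw [Matrix.transpose_mul]
                have h2 : M * hmat * J (Fin n) ℂ * (hmatᵀ * Mᵀ) =
                    M * (hmat * J (Fin n) ℂ * hmatᵀ) * Mᵀ := by noncomm_ring
                rw [h2, hsymp, ← hM]
              rw [hcm]
            · intro i
              rw [one_mul, ← Matrix.mulVec_mulVec, hvec, hwx]
          rw [harg] at h0
          exact h0
        set θ : Polynomial ℂ := MvPolynomial.aeval (Sum.elim
          (fun p : (Fin n ⊕ Fin n) × (Fin n ⊕ Fin n) =>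
            Polynomial.C (A p.1 p.2) + Polynomial.C (J (Fin n) ℂ p.1 p.2) * Polynomial.X)
          (fun i => Polynomial.C (x i))) Q with hθdef
        have hθeval : ∀ ε : ℂ, θ.eval ε =
            eval (Sum.elim (fun p : (Fin n ⊕ Fin n) × (Fin n ⊕ Fin n) =>
              (A + ε • J (Fin n) ℂ) p.1 p.2) x) Q := by
          intro ε
          rw [hθdef, KsII4.polyeval_aeval]
          have hfun : (fun s => Polynomial.eval ε ((Sum.elim
              (fun p : (Fin n ⊕ Fin n) × (Fin n ⊕ Fin n) =>
                Polynomial.C (A p.1 p.2) + Polynomial.C (J (Fin n) ℂ p.1 p.2) * Polynomial.X)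
              (fun i => Polynomial.C (x i))) s)) =
              Sum.elim (fun p : (Fin n ⊕ Fin n) × (Fin n ⊕ Fin n) =>
                (A + ε • J (Fin n) ℂ) p.1 p.2) x := by
            funext sv
            rcases sv with p | i
            · simp only [Sum.elim_inl, Polynomial.eval_add, Polynomial.eval_mul,
                Polynomial.eval_C, Polynomial.eval_X, Matrix.add_apply,
                Matrix.smul_apply, smul_eq_mul]
              ring
            · simp
          exact congrArg (fun F => eval F Q) hfun
        have hfactor : ∀ ε : ℂ, A + ε • J (Fin n) ℂ =
            (ε • 1 - A * J (Fin n) ℂ) * J (Fin n) ℂ := by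
          intro ε
          rw [Matrix.sub_mul, Matrix.smul_mul, Matrix.one_mul, Matrix.mul_assoc,
            J_squared, Matrix.mul_neg, Matrix.mul_one, sub_neg_eq_add]
          abel
        have hdeteq : ∀ ε : ℂ, (A + ε • J (Fin n) ℂ).det =
            Polynomial.eval ε (A * J (Fin n) ℂ).charpoly := by
          intro ε
          rw [KsII4.eval_charpoly', hfactor ε, Matrix.det_mul, KsII4.det_J', mul_one]
        have hfin : {ε : ℂ | (A * J (Fin n) ℂ).charpoly.IsRoot ε}.Finite :=
          Polynomial.finite_setOf_isRoot (Matrix.charpoly_monic _).ne_zero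
        have hsub : {ε : ℂ | (A * J (Fin n) ℂ).charpoly.IsRoot ε}ᶜ ⊆
            {ε : ℂ | θ.IsRoot ε} := by
          intro ε hε
          have hd : (A + ε • J (Fin n) ℂ).det ≠ 0 := by
            rw [hdeteq]
            exact hε
          show θ.eval ε = 0
          rw [hθeval ε]
          exact hQgood ε hd
        have hinf : {ε : ℂ | θ.IsRoot ε}.Infinite :=
          Set.Infinite.mono hsub (Set.Finite.infinite_compl hfin)
        have hθ0 : θ = 0 := Polynomial.eq_zero_of_infinite_isRoot θ hinf
        have h0 := hθeval 0
        rw [hθ0, Polynomial.eval_zero] at h0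
        rw [show Sum.elim (fun p : (Fin n ⊕ Fin n) × (Fin n ⊕ Fin n) =>
            (A + (0:ℂ) • J (Fin n) ℂ) p.1 p.2) x =
          Sum.elim (fun p : (Fin n ⊕ Fin n) × (Fin n ⊕ Fin n) => A p.1 p.2) x from
          KsII4.sum_elim_congr (fun p => by simp) (fun i => rfl)] at h0
        exact h0.symm
end
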